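/- arXiv:2303.06297 — 10 statements merged into one kernel-verified Lean document; each statement's English description precedes it below -/
import Mathlib

section
/- For the complete graph K_n with n ≥ 3 and adjacency transition matrix U(t) = exp(itA), the diagonal entry satisfies |U(t)_{u,u}| = |n - 1 + e^{itn}|/n ≥ 1 - 2/n for all real t, for every vertex u. -/
open Complex Matrix Nat

attribute [local instance] Matrix.linftyOpNormedRing Matrix.linftyOpNormedAlgebra

namespace KnHelper

variable (n : ℕ)

noncomputable def J : Matrix (Fin n) (Fin n) ℂ := Matrix.of fun _ _ => (1 : ℂ)

lemma J_mul_J : J n * J n = (n : ℂ) • J n := by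
  ext i j
  simp [J, Matrix.mul_apply]

lemma smul_J_pow (c : ℂ) (k : ℕ) :
    (c • J n) ^ (k + 1) = (c ^ (k + 1) * (n : ℂ) ^ k) • J n := by
  induction k with
  | zero => simp
  | succ k ih =>
      rw [pow_succ, ih, Matrix.smul_mul, Matrix.mul_smul, J_mul_J, smul_smul, smul_smul]
      congr 1
      ring

lemma exp_smul_J (hn : 0 < n) (c : ℂ) :
    NormedSpace.exp (c • J n) =
      1 + ((Complex.exp (c * n) - 1) / n) • J n := by
  have hn0 : (n : ℂ) ≠ 0 := Nat.cast_ne_zero.2 hn.ne'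
  have hsum : Summable fun k : ℕ => ((k ! : ℂ))⁻¹ • (c * n) ^ k :=
    NormedSpace.expSeries_summable' (𝕂 := ℂ) (c * n)
  have hsum' : Summable fun k : ℕ => (((k + 1)! : ℂ))⁻¹ • (c * n) ^ (k + 1) :=
    hsum.comp_injective Nat.succ_injective
  have hfeq : (fun k : ℕ => (((k + 1)! : ℂ))⁻¹ * (c ^ (k + 1) * (n : ℂ) ^ k)) =
      fun k : ℕ => (n : ℂ)⁻¹ * ((((k + 1)! : ℂ))⁻¹ • (c * n) ^ (k + 1)) := by
    funext k
    have : (c * n) ^ (k + 1) = c ^ (k + 1) * (n : ℂ) ^ k * n := by ring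
    rw [this]
    field_simp
    rw [smul_eq_mul]
    ring
  have htsum1 : ∑' k : ℕ, (((k + 1)! : ℂ))⁻¹ • (c * n) ^ (k + 1)
      = Complex.exp (c * n) - 1 := by
    have h0 : ∑' k : ℕ, ((k ! : ℂ))⁻¹ • (c * n) ^ k = Complex.exp (c * n) := by
      rw [Complex.exp_eq_exp_ℂ, NormedSpace.exp_eq_tsum ℂ]
    rw [Summable.tsum_eq_zero_add hsum] at h0
    simp only [Nat.factorial_zero, Nat.cast_one, inv_one, pow_zero, one_smul] at h0
    linear_combination h0
  simp only [NormedSpace.exp_eq_tsum ℂ]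
  erw [Summable.tsum_eq_zero_add (NormedSpace.expSeries_summable' (𝕂 := ℂ) (c • J n))]
  simp only [Nat.factorial_zero, Nat.cast_one, inv_one, pow_zero, one_smul]
  congr 1
  have : (fun k : ℕ => (((k + 1)! : ℂ))⁻¹ • (c • J n) ^ (k + 1)) =
      fun k : ℕ => ((((k + 1)! : ℂ))⁻¹ * (c ^ (k + 1) * (n : ℂ) ^ k)) • J n := by
    funext k
    rw [smul_J_pow, smul_smul]
  rw [this]
  rw [Summable.tsum_smul_const]
  · congr 1
    rw [hfeq, tsum_mul_left, htsum1]
    field_simp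
  · rw [hfeq]
    exact hsum'.mul_left _

end KnHelper

/-- For the complete graph `K n` (`n ≥ 3`) with adjacency matrix `A = J - I` and
transition matrix `U t = exp (i t A)`, every diagonal entry satisfies
`|U(t)_{u,u}| = |n - 1 + e^{itn}| / n ≥ 1 - 2/n`. -/
theorem stmt_0 (n : ℕ) (hn : 3 ≤ n)
    (A : Matrix (Fin n) (Fin n) ℂ)
    (hA : A = Matrix.of fun i j => if i = j then 0 else 1)
    (t : ℝ) (u : Fin n) :
    ‖(NormedSpace.exp ((Complex.I * t) • A)) u u‖
        = ‖(n : ℂ) - 1 + Complex.exp (Complex.I * t * n)‖ / n ∧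
    1 - 2 / (n : ℝ) ≤
      ‖(NormedSpace.exp ((Complex.I * t) • A)) u u‖ := by
  have hn3 : (3:ℝ) ≤ (n:ℝ) := by exact_mod_cast hn
  have hnpos : (0:ℝ) < (n:ℝ) := by linarith
  have hnc : (n : ℂ) ≠ 0 := Nat.cast_ne_zero.2 (by omega)
  set c : ℂ := Complex.I * t with hc
  have hAJ : A = KnHelper.J n - 1 := by
    rw [hA]; ext i j
    by_cases h : i = j <;> simp [KnHelper.J, Matrix.one_apply, h]
  have hsplit : (c • A) = c • KnHelper.J n + (-c) • (1 : Matrix (Fin n) (Fin n) ℂ) := by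
    rw [hAJ, smul_sub, neg_smul, ← sub_eq_add_neg]
  have hcomm : Commute (c • KnHelper.J n) ((-c) • (1 : Matrix (Fin n) (Fin n) ℂ)) :=
    Commute.smul_left (Commute.smul_right (Commute.one_right _) _) _
  have hone : ((-c) • (1 : Matrix (Fin n) (Fin n) ℂ)) = algebraMap ℂ _ (-c) :=
    (Algebra.algebraMap_eq_smul_one (-c)).symm
  have hexp : NormedSpace.exp (c • A) =
      Complex.exp (-c) • NormedSpace.exp (c • KnHelper.J n) := by
    rw [hsplit, Matrix.exp_add_of_commute _ _ hcomm, hone]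
    erw [← NormedSpace.algebraMap_exp_comm]
    rw [← Complex.exp_eq_exp_ℂ,
      Algebra.algebraMap_eq_smul_one, Matrix.mul_smul, Matrix.mul_one]
  have hJ := KnHelper.exp_smul_J n (by omega) c
  have hentry : (NormedSpace.exp (c • A)) u u
      = Complex.exp (-c) * (((n:ℂ) - 1 + Complex.exp (c * n)) / n) := by
    rw [hexp, hJ]
    simp only [Matrix.smul_apply, Matrix.add_apply, Matrix.one_apply_eq, KnHelper.J,
      Matrix.of_apply, smul_eq_mul]
    rw [mul_one]
    congr 1
    field_simp
    ring
  have habse : ‖Complex.exp (c * n)‖ = 1 := by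
    rw [Complex.norm_exp]
    simp [hc]
  have habs : ‖(NormedSpace.exp (c • A)) u u‖
      = ‖(n : ℂ) - 1 + Complex.exp (Complex.I * t * n)‖ / n := by
    rw [hentry, norm_mul, norm_div, Complex.norm_exp]
    simp only [hc]
    norm_num
  refine ⟨habs, ?_⟩
  rw [habs]
  have h2 : ‖(n:ℂ)-1‖ = (n:ℝ)-1 := by
    rw [show ((n:ℂ)-1) = (((n:ℝ)-1 : ℝ) : ℂ) by push_cast; ring, Complex.norm_real, Real.norm_eq_abs,
      _root_.abs_of_nonneg (by linarith)]
  have h4 : ‖(n:ℂ)-1‖ ≤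
      ‖(n:ℂ) - 1 + Complex.exp (Complex.I * t * n)‖
        + ‖Complex.exp (Complex.I * t * n)‖ := by
    have := norm_add_le ((n:ℂ) - 1 + Complex.exp (Complex.I * t * n))
      (-Complex.exp (Complex.I * t * n))
    simpa using this
  have habse' : ‖Complex.exp (Complex.I * t * n)‖ = 1 := by
    simpa [hc] using habse
  have h3 : (n:ℝ) - 2 ≤ ‖(n:ℂ) - 1 + Complex.exp (Complex.I * t * n)‖ := by
    rw [h2, habse'] at h4; linarith
  have heq : 1 - 2/(n:ℝ) = ((n:ℝ)-2)/n := by field_simp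
  rw [heq]
  gcongr
end

section
/- For the complete graph K_n with n ≥ 3, equality |U(t)_{u,u}| = 1 - 2/n holds if and only if t = jπ/n for some odd integer j. -/
open Complex Matrix Nat

open NormedSpace in
lemma exp_smul_idem {m : Type*} [Fintype m] [DecidableEq m]
    (P : Matrix m m ℂ) (hP : P * P = P) (l : ℂ) :
    exp (l • P) = Complex.exp l • P + (1 - P) := by
  letI : SeminormedRing (Matrix m m ℂ) := Matrix.linftyOpSemiNormedRing
  letI : NormedRing (Matrix m m ℂ) := Matrix.linftyOpNormedRing
  letI : NormedAlgebra ℂ (Matrix m m ℂ) := Matrix.linftyOpNormedAlgebra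
  have hPk : ∀ k : ℕ, P ^ (k + 1) = P := by
    intro k
    induction k with
    | zero => simp
    | succ k ih => rw [pow_succ, ih, hP]
  have hsum : Summable fun k : ℕ => (k ! : ℂ)⁻¹ * l ^ k := by
    simpa [div_eq_inv_mul] using expSeries_div_summable l
  have h1 : (fun k : ℕ => ((k ! : ℂ)⁻¹) • (l • P) ^ k)
      = (fun k : ℕ => ((k ! : ℂ)⁻¹ * l ^ k) • P)
        + (fun k : ℕ => if k = 0 then (1 : Matrix m m ℂ) - P else 0) := by
    funext k
    match k with
    | 0 => simp
    | (k + 1) => simp [smul_pow, hPk k, smul_smul]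
  have hg : Summable fun k : ℕ => ((k ! : ℂ)⁻¹ * l ^ k) • P := hsum.smul_const P
  have hh : Summable fun k : ℕ => if k = 0 then (1 : Matrix m m ℂ) - P else 0 := by
    apply summable_of_ne_finset_zero (s := {0})
    intro k hk
    simp only [Finset.mem_singleton] at hk
    simp [hk]
  have hexp : (∑' k : ℕ, (k ! : ℂ)⁻¹ * l ^ k) = Complex.exp l := by
    rw [Complex.exp_eq_exp_ℂ, exp_eq_tsum ℂ]
    simp [smul_eq_mul]
  rw [exp_eq_tsum ℂ]
  show (∑' k : ℕ, ((k ! : ℂ)⁻¹) • (l • P) ^ k) = _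
  rw [h1]
  rw [show ((fun k : ℕ => ((k ! : ℂ)⁻¹ * l ^ k) • P)
      + fun k : ℕ => if k = 0 then (1 : Matrix m m ℂ) - P else 0)
      = fun k : ℕ => ((k ! : ℂ)⁻¹ * l ^ k) • P
        + (if k = 0 then (1 : Matrix m m ℂ) - P else 0) from rfl]
  rw [hg.tsum_add hh, hsum.tsum_smul_const, tsum_ite_eq, hexp]

/-- For the complete graph `K n` (`n ≥ 3`), equality `|U(t)_{u,u}| = 1 - 2/n`
holds if and only if `t = jπ/n` for some odd integer `j`. -/
theorem stmt_1 (n : ℕ) (hn : 3 ≤ n)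
    (A : Matrix (Fin n) (Fin n) ℂ)
    (hA : A = Matrix.of fun i j => if i = j then 0 else 1)
    (t : ℝ) (u : Fin n) :
    ‖(NormedSpace.exp ((Complex.I * t) • A)) u u‖ = 1 - 2 / (n : ℝ) ↔
      ∃ j : ℤ, Odd j ∧ t = j * Real.pi / n := by
  have hnR : (3:ℝ) ≤ (n:ℝ) := by exact_mod_cast hn
  have hn0 : (0:ℝ) < n := by linarith
  have hnC : (n : ℂ) ≠ 0 := by exact_mod_cast (show (n:ℝ) ≠ 0 by linarith)
  set J : Matrix (Fin n) (Fin n) ℂ := Matrix.of (fun _ _ => 1) with hJ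
  have hJJ : J * J = (n : ℂ) • J := by
    ext i j; simp [hJ, Matrix.mul_apply]
  set P : Matrix (Fin n) (Fin n) ℂ := (n : ℂ)⁻¹ • J with hPdef
  have hPP : P * P = P := by
    rw [hPdef, Matrix.smul_mul, Matrix.mul_smul, hJJ, smul_smul, smul_smul,
      mul_assoc, inv_mul_cancel₀ hnC, mul_one]
  have hA' : (Complex.I * t) • A
      = ((Complex.I * t * n) • P) + ((-(Complex.I * t)) • (1 : Matrix (Fin n) (Fin n) ℂ)) := by
    rw [hPdef, smul_smul, mul_assoc, mul_inv_cancel₀ hnC, mul_one, hA]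
    ext i j
    by_cases h : i = j <;> simp [hJ, h, Matrix.one_apply]
  have hcomm : Commute ((Complex.I * t * n) • P)
      ((-(Complex.I * t)) • (1 : Matrix (Fin n) (Fin n) ℂ)) :=
    ((Commute.one_right _).smul_right _).smul_left _
  have hdiag : (NormedSpace.exp ((Complex.I * t) • A)) u u
      = Complex.exp (-(Complex.I * t))
          * (Complex.exp (Complex.I * t * n) * (n : ℂ)⁻¹ + 1 - (n : ℂ)⁻¹) := by
    rw [hA', Matrix.exp_add_of_commute _ _ hcomm, exp_smul_idem P hPP,
      exp_smul_idem 1 (by simp) _]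
    simp only [sub_self, add_zero, Matrix.mul_smul, Matrix.mul_one]
    simp [hPdef, hJ, Matrix.one_apply, mul_comm, mul_add, add_sub_assoc]
  rw [hdiag, norm_mul, Complex.norm_exp]
  have hre : (-(Complex.I * (t:ℂ))).re = 0 := by simp
  rw [hre, Real.exp_zero, one_mul]
  -- rewrite the inner complex number in terms of cos/sin of (t*n)
  have hz : Complex.exp (Complex.I * t * n) * (n : ℂ)⁻¹ + 1 - (n : ℂ)⁻¹
      = Complex.ofReal (Real.cos (t*n) / n + 1 - 1/n) + Complex.ofReal (Real.sin (t*n) / n) * Complex.I := by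
    have : Complex.I * t * n = ((t*n : ℝ) : ℂ) * Complex.I := by push_cast; ring
    rw [this, Complex.exp_mul_I]
    push_cast [Complex.cos_ofReal_re, Complex.sin_ofReal_re]
    field_simp
    ring
  rw [hz]
  have habs2 : (‖Complex.ofReal (Real.cos (t*n) / n + 1 - 1/n)
      + Complex.ofReal (Real.sin (t*n) / n) * Complex.I‖)^2
      = (Real.cos (t*n) / n + 1 - 1/n)^2 + (Real.sin (t*n) / n)^2 := by
    rw [Complex.sq_norm, Complex.normSq_apply]
    simp only [Complex.add_re, Complex.add_im, Complex.ofReal_re, Complex.ofReal_im,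
      Complex.mul_re, Complex.mul_im, Complex.I_re, Complex.I_im]
    ring
  have key : ‖Complex.ofReal (Real.cos (t*n) / n + 1 - 1/n)
      + Complex.ofReal (Real.sin (t*n) / n) * Complex.I‖ = 1 - 2 / (n:ℝ)
      ↔ Real.cos (t*n) = -1 := by
    constructor
    · intro h
      have h2 : (Real.cos (t*n) / n + 1 - 1/n)^2 + (Real.sin (t*n) / n)^2 = (1 - 2/(n:ℝ))^2 := by
        rw [← habs2, h]
      have hs : Real.sin (t*n)^2 = 1 - Real.cos (t*n)^2 := Real.sin_sq (t*n)
      have hne : (n:ℝ) ≠ 0 := by linarith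
      field_simp at h2
      have hfac : (Real.cos (t*n) + 1) * (2 * ((n:ℝ) - 1) * (n:ℝ)) = 0 := by nlinarith [h2, hs]
      rcases mul_eq_zero.1 hfac with h' | h'
      · linarith
      · nlinarith
    · intro h
      have hs : Real.sin (t*n)^2 = 1 - Real.cos (t*n)^2 := Real.sin_sq (t*n)
      rw [h] at hs ⊢
      have hs0 : Real.sin (t*n) = 0 := by
        have : Real.sin (t*n)^2 = 0 := by rw [hs]; ring
        exact pow_eq_zero_iff (by norm_num) |>.1 this
      rw [hs0]
      have : Complex.ofReal (-1 / n + 1 - 1/n) + Complex.ofReal (0 / n) * Complex.I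
          = Complex.ofReal (1 - 2/(n:ℝ)) := by push_cast; ring
      rw [this, Complex.norm_real, Real.norm_eq_abs, _root_.abs_of_nonneg]
      have : 2 / (n:ℝ) ≤ 2/3 := by
        apply div_le_div_of_nonneg_left <;> linarith
      linarith
  rw [key, Real.cos_eq_neg_one_iff]
  constructor
  · rintro ⟨k, hk⟩
    refine ⟨2*k+1, ⟨k, by ring⟩, ?_⟩
    have hne : (n:ℝ) ≠ 0 := by linarith
    field_simp
    push_cast
    linarith [hk]
  · rintro ⟨j, ⟨k, hk⟩, rfl⟩
    refine ⟨k, ?_⟩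
    have hne : (n:ℝ) ≠ 0 := by linarith
    subst hk
    field_simp
    push_cast
    ring
end

section
/- Let H be a real symmetric matrix with spectral decomposition H = Σ_j λ_j E_j and let u be an index. If some single eigenvalue λ₁ satisfies (E₁)_{u,u} = a with a > 1/2, then |exp(itH)_{u,u}| ≥ 2a − 1 for all real t; in particular u is (2a−1)-sedentary. -/
open Complex Matrix

lemma exp_smul_idem_s5 {m : ℕ} (E : Matrix (Fin m) (Fin m) ℂ) (hE : E * E = E) (c : ℂ) :
    NormedSpace.exp (c • E) = 1 + (Complex.exp c - 1) • E := by
  letI : SeminormedRing (Matrix (Fin m) (Fin m) ℂ) := Matrix.linftyOpSemiNormedRing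
  letI : NormedRing (Matrix (Fin m) (Fin m) ℂ) := Matrix.linftyOpNormedRing
  letI : NormedAlgebra ℂ (Matrix (Fin m) (Fin m) ℂ) := Matrix.linftyOpNormedAlgebra
  have hpow : ∀ k : ℕ, E ^ (k + 1) = E := by
    intro k; induction k with
    | zero => simp
    | succ k ih => rw [pow_succ, ih, hE]
  have hsum := NormedSpace.expSeries_summable' (𝕂 := ℂ) (c • E)
  have hsc := NormedSpace.expSeries_summable' (𝕂 := ℂ) c
  have hsc' : Summable fun k : ℕ => (((k+1).factorial : ℂ))⁻¹ * c ^ (k+1) := by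
    have := (summable_nat_add_iff 1).mpr hsc
    simpa [smul_eq_mul] using this
  rw [NormedSpace.exp_eq_tsum ℂ]
  beta_reduce
  erw [Summable.tsum_eq_zero_add hsum]
  have h1 : ∀ k : ℕ, (((k+1).factorial : ℂ))⁻¹ • (c • E) ^ (k+1)
      = ((((k+1).factorial : ℂ))⁻¹ * c ^ (k+1)) • E := by
    intro k; rw [smul_pow, hpow, smul_smul]
  have h2 : (∑' k : ℕ, (((k+1).factorial : ℂ))⁻¹ • (c • E) ^ (k+1))
      = (∑' k : ℕ, (((k+1).factorial : ℂ))⁻¹ * c ^ (k+1)) • E := by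
    simp_rw [h1]
    exact Summable.tsum_smul_const hsc' E
  have h3 : (∑' k : ℕ, (((k+1).factorial : ℂ))⁻¹ * c ^ (k+1)) = Complex.exp c - 1 := by
    have hexp : Complex.exp c = ∑' n : ℕ, ((n.factorial : ℂ))⁻¹ • c ^ n := by
      rw [Complex.exp_eq_exp_ℂ, NormedSpace.exp_eq_tsum ℂ]
    rw [Summable.tsum_eq_zero_add hsc] at hexp
    simp only [smul_eq_mul, pow_zero, Nat.factorial_zero, Nat.cast_one, inv_one, one_mul] at hexp
    rw [hexp, add_sub_cancel_left]
  erw [h2, h3]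
  simp

lemma exp_sum_smul_idem {m r : ℕ} (E : Fin r → Matrix (Fin m) (Fin m) ℂ)
    (hEidem : ∀ j, E j * E j = E j)
    (hEorth : ∀ i j, i ≠ j → E i * E j = 0) (c : Fin r → ℂ) (s : Finset (Fin r)) :
    NormedSpace.exp (∑ j ∈ s, c j • E j)
      = 1 + ∑ j ∈ s, (Complex.exp (c j) - 1) • E j := by
  induction s using Finset.induction with
  | empty => simp [NormedSpace.exp_zero]
  | @insert i s his ih =>
    rw [Finset.sum_insert his, Finset.sum_insert his]
    have hcomm : Commute (c i • E i) (∑ j ∈ s, c j • E j) := by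
      apply Commute.sum_right
      intro j hj
      have hij : i ≠ j := fun h => his (h ▸ hj)
      show _ * _ = _ * _
      rw [smul_mul_smul_comm, smul_mul_smul_comm, hEorth i j hij, hEorth j i hij.symm]
      simp [mul_comm]
    rw [Matrix.exp_add_of_commute _ _ hcomm, exp_smul_idem_s5 _ (hEidem i), ih]
    have hzero : ∀ (x : ℂ) (f : Fin r → ℂ), (x • E i) * ∑ j ∈ s, f j • E j = 0 := by
      intro x f
      rw [Finset.mul_sum]
      apply Finset.sum_eq_zero
      intro j hj
      have hij : i ≠ j := fun h => his (h ▸ hj)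
      rw [smul_mul_smul_comm, hEorth i j hij, smul_zero]
    rw [mul_add, add_mul, add_mul, hzero, one_mul, one_mul, mul_one]
    abel

/-- If `H = Σ λ_j E_j` is real symmetric and some single spectral projection satisfies
`(E₁)_{u,u} = a` with `a > 1/2`, then `|exp(itH)_{u,u}| ≥ 2a − 1` for all `t`;
in particular `u` is `(2a−1)`-sedentary. -/
theorem stmt_5 (n r : ℕ)
    (H : Matrix (Fin n) (Fin n) ℂ) (hH : H.IsHermitian)
    (hHreal : ∀ i j, (H i j).im = 0)
    (lam : Fin r → ℝ) (hlam : Function.Injective lam)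
    (E : Fin r → Matrix (Fin n) (Fin n) ℂ)
    (hEherm : ∀ j, (E j).IsHermitian)
    (hEidem : ∀ j, E j * E j = E j)
    (hEorth : ∀ i j, i ≠ j → E i * E j = 0)
    (hEsum : ∑ j, E j = 1)
    (hspec : H = ∑ j, (lam j : ℂ) • E j)
    (u : Fin n) (j₁ : Fin r)
    (a : ℝ) (ha : 1 / 2 < a)
    (haj : (E j₁) u u = (a : ℂ)) :
    ∀ t : ℝ, 2 * a - 1 ≤ ‖(NormedSpace.exp ((Complex.I * t) • H)) u u‖ := by
  intro t
  set c : Fin r → ℂ := fun j => Complex.I * t * lam j with hc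
  -- rewrite the exponent
  have hsmul : (Complex.I * t) • H = ∑ j, c j • E j := by
    rw [hspec, Finset.smul_sum]
    exact Finset.sum_congr rfl fun j _ => by rw [smul_smul]
  -- diagonal entries of projections are nonneg reals
  set D : Fin r → ℝ := fun j => ∑ k, Complex.normSq (E j u k) with hDdef
  have hD : ∀ j, (E j) u u = (D j : ℂ) := by
    intro j
    have h1 : (E j) u u = (E j * E j) u u := by rw [hEidem j]
    rw [h1, Matrix.mul_apply]
    have h2 : ∀ k, E j k u = starRingEnd ℂ (E j u k) := by
      intro k
      conv_lhs => rw [← hEherm j]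
      rw [Matrix.conjTranspose_apply]
      rfl
    push_cast [hDdef]
    exact Finset.sum_congr rfl fun k _ => by rw [h2 k, Complex.mul_conj]
  have hDnonneg : ∀ j, 0 ≤ D j :=
    fun j => Finset.sum_nonneg fun k _ => Complex.normSq_nonneg _
  have hDsum : ∑ j, D j = 1 := by
    have h1 : (∑ j, E j) u u = (1 : Matrix (Fin n) (Fin n) ℂ) u u := by rw [hEsum]
    rw [Matrix.sum_apply, Matrix.one_apply_eq] at h1
    have h2 : ((∑ j, D j : ℝ) : ℂ) = 1 := by
      push_cast
      rw [← h1]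
      exact Finset.sum_congr rfl fun j _ => (hD j).symm
    exact_mod_cast h2
  have hDa : D j₁ = a := by
    have := (hD j₁).symm.trans haj
    exact_mod_cast this
  -- compute the entry
  have hentry : (NormedSpace.exp ((Complex.I * t) • H)) u u
      = ∑ j, Complex.exp (c j) * (D j : ℂ) := by
    rw [hsmul, exp_sum_smul_idem E hEidem hEorth c]
    rw [Matrix.add_apply, Matrix.one_apply_eq, Matrix.sum_apply]
    have h1 : ∑ j, ((Complex.exp (c j) - 1) • E j) u u
        = ∑ j, (Complex.exp (c j) - 1) * (D j : ℂ) :=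
      Finset.sum_congr rfl fun j _ => by rw [Matrix.smul_apply, hD j, smul_eq_mul]
    rw [h1]
    have h2 : (1 : ℂ) = ∑ j, (D j : ℂ) := by
      push_cast
      exact_mod_cast (congrArg (fun x : ℝ => (x : ℂ)) hDsum).symm
    have h3 : ∑ j, (Complex.exp (c j) - 1) * (D j : ℂ)
        = (∑ j, Complex.exp (c j) * (D j : ℂ)) - ∑ j, (D j : ℂ) := by
      rw [← Finset.sum_sub_distrib]
      exact Finset.sum_congr rfl fun j _ => by ring
    rw [h3, ← h2]
    ring
  rw [hentry]
  -- norms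
  have habs : ∀ j, ‖Complex.exp (c j)‖ = 1 := by
    intro j
    rw [Complex.norm_exp]
    have : (c j).re = 0 := by simp [hc, Complex.mul_re]
    rw [this, Real.exp_zero]
  set z : ℂ := ∑ j, Complex.exp (c j) * (D j : ℂ) with hz
  set w : ℂ := ∑ j ∈ Finset.univ.erase j₁, Complex.exp (c j) * (D j : ℂ) with hw
  have hsplit : w + Complex.exp (c j₁) * (D j₁ : ℂ) = z :=
    Finset.sum_erase_add _ _ (Finset.mem_univ j₁)
  have hwabs : ‖w‖ ≤ 1 - a := by
    calc ‖w‖ ≤ ∑ j ∈ Finset.univ.erase j₁,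
          ‖Complex.exp (c j) * (D j : ℂ)‖ := by
          exact norm_sum_le _ _
      _ = ∑ j ∈ Finset.univ.erase j₁, D j := by
          refine Finset.sum_congr rfl fun j _ => ?_
          rw [norm_mul, habs j, one_mul, Complex.norm_real, Real.norm_eq_abs, _root_.abs_of_nonneg (hDnonneg j)]
      _ = 1 - a := by
          have := Finset.sum_erase_add Finset.univ D (Finset.mem_univ j₁)
          rw [hDa] at this
          rw [hDsum] at this
          linarith
  have hterm : ‖Complex.exp (c j₁) * (D j₁ : ℂ)‖ = a := by
    rw [norm_mul, habs j₁, one_mul, Complex.norm_real, Real.norm_eq_abs, hDa, _root_.abs_of_nonneg (by linarith : (0:ℝ) ≤ a)]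
  have hle : a ≤ ‖z‖ + ‖w‖ := by
    have h1 : Complex.exp (c j₁) * (D j₁ : ℂ) = z - w := by rw [← hsplit]; ring
    calc a = ‖z - w‖ := by rw [← h1, hterm]
      _ ≤ ‖z‖ + ‖w‖ := by
          simpa [sub_eq_add_neg, norm_neg] using norm_add_le z (-w)
  linarith
end

section
/- Let T be a set of twins in a weighted graph X (all pairwise twins with common loop weight ω and common mutual edge weight η), and let M be the generalized adjacency matrix α D + A. Then for any vertex u ∈ T, |exp(itM)_{u,u}| ≥ 1 − 2/|T| for all real t. -/
open Complex Matrix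

section AuxStmt6
open NormedSpace

variable {V : Type*} [Fintype V] [DecidableEq V]

lemma stmt6_exp_mulVec_eigen (S : Matrix V V ℂ) (x : V → ℂ) (θ : ℂ)
    (h : S.mulVec x = θ • x) :
    (NormedSpace.exp S).mulVec x = NormedSpace.exp θ • x := by
  letI : SeminormedRing (Matrix V V ℂ) := Matrix.linftyOpSemiNormedRing
  letI : NormedRing (Matrix V V ℂ) := Matrix.linftyOpNormedRing
  letI : NormedAlgebra ℂ (Matrix V V ℂ) := Matrix.linftyOpNormedAlgebra
  have hpow : ∀ n : ℕ, (S ^ n).mulVec x = θ ^ n • x := by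
    intro n
    induction n with
    | zero => simp
    | succ n ih =>
      rw [pow_succ, ← Matrix.mulVec_mulVec, h, Matrix.mulVec_smul, ih, smul_smul,
        pow_succ, mul_comm]
  let f : Matrix V V ℂ →ₗ[ℂ] (V → ℂ) :=
    { toFun := fun N => N.mulVec x
      map_add' := fun N P => Matrix.add_mulVec N P x
      map_smul' := fun c N => by simp [Matrix.smul_mulVec] }
  have hf : Continuous f := f.continuous_of_finiteDimensional
  have hsum : Summable fun n : ℕ => ((n.factorial : ℂ))⁻¹ • S ^ n := expSeries_summable' S
  have hsumθ : Summable fun n : ℕ => ((n.factorial : ℂ))⁻¹ • θ ^ n := expSeries_summable' θ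
  have key : f (∑' n : ℕ, ((n.factorial : ℂ))⁻¹ • S ^ n)
      = ∑' n : ℕ, f (((n.factorial : ℂ))⁻¹ • S ^ n) :=
    ((hsum.hasSum.map f.toAddMonoidHom hf).tsum_eq).symm
  have : (NormedSpace.exp S).mulVec x = ∑' n : ℕ, (((n.factorial : ℂ))⁻¹ * θ ^ n) • x := by
    rw [exp_eq_tsum (𝕂 := ℂ)]
    refine key.trans ?_
    congr 1
    ext n
    simp only [f, LinearMap.coe_mk, AddHom.coe_mk, Matrix.smul_mulVec, hpow, smul_smul]
  rw [this, exp_eq_tsum (𝕂 := ℂ)]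
  have hs : Summable fun n : ℕ => ((n.factorial : ℂ))⁻¹ * θ ^ n := by
    simpa [smul_eq_mul] using hsumθ
  rw [hs.tsum_smul_const]
  simp [smul_eq_mul]

lemma stmt6_unitary (S : Matrix V V ℂ) (hS : Sᴴ = -S) :
    NormedSpace.exp S * (NormedSpace.exp S)ᴴ = 1 := by
  rw [← Matrix.exp_conjTranspose, hS,
    ← Matrix.exp_add_of_commute S (-S) (Commute.refl S).neg_right]
  simp [exp_zero]

end AuxStmt6

/-- If `T` is a set of twins in a weighted graph `X` (pairwise twins with common loop
weight `ω` and common mutual edge weight `η`) and `M = αD + A` is a generalized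
adjacency matrix, then every `u ∈ T` satisfies `|exp(itM)_{u,u}| ≥ 1 − 2/|T|`. -/
theorem stmt_6 {V : Type*} [Fintype V] [DecidableEq V]
    (A : Matrix V V ℝ) (hA : A.IsSymm)
    (α ω η : ℝ)
    (deg : V → ℝ) (hdeg : ∀ u, deg u = A u u + ∑ j, A u j)
    (T : Finset V) (hT : 2 ≤ T.card)
    (hloop : ∀ u ∈ T, A u u = ω)
    (hedge : ∀ u ∈ T, ∀ v ∈ T, u ≠ v → A u v = η)
    (htwin : ∀ u ∈ T, ∀ v ∈ T, u ≠ v → ∀ w, w ≠ u → w ≠ v → A u w = A v w)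
    (M : Matrix V V ℂ)
    (hM : M = (α • Matrix.diagonal deg + A).map Complex.ofReal) :
    ∀ u ∈ T, ∀ t : ℝ,
      1 - 2 / (T.card : ℝ) ≤
        ‖(NormedSpace.exp ((Complex.I * t) • M)) u u‖ := by
  intro u huT t
  set S : Matrix V V ℂ := (Complex.I * t) • M with hSdef
  set U : Matrix V V ℂ := NormedSpace.exp S with hUdef
  -- entries of M
  have hMentry : ∀ a b, M a b = ((α * (if a = b then deg a else 0) + A a b : ℝ) : ℂ) := by
    intro a b
    rw [hM]
    simp [Matrix.map_apply, Matrix.add_apply, Matrix.smul_apply, Matrix.diagonal_apply,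
      smul_eq_mul]
  -- M is Hermitian
  have hMH : Mᴴ = M := by
    ext i j
    rw [Matrix.conjTranspose_apply, hMentry i j, hMentry j i, Complex.star_def,
      Complex.conj_ofReal]
    by_cases hij : i = j
    · subst hij; simp
    · have hji : ¬ j = i := fun h => hij h.symm
      rw [if_neg hij, if_neg hji, hA.apply i j]
  -- S is skew-Hermitian
  have hSH : Sᴴ = -S := by
    rw [hSdef, Matrix.conjTranspose_smul, hMH]
    have : star (Complex.I * (t : ℂ)) = -(Complex.I * (t : ℂ)) := by
      simp [Complex.star_def, mul_comm]
    rw [this, neg_smul]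
  -- the eigenvalue
  set θ : ℂ := ((α * deg u + ω - η : ℝ) : ℂ) with hθdef
  set c : ℂ := NormedSpace.exp ((Complex.I * (t : ℂ)) * θ) with hcdef
  have hcabs : ‖c‖ = 1 := by
    rw [hcdef, ← Complex.exp_eq_exp_ℂ, Complex.norm_exp]
    have : ((Complex.I * (t : ℂ)) * θ).re = 0 := by
      rw [hθdef]
      simp [Complex.mul_re, Complex.mul_im]
    rw [this, Real.exp_zero]
  -- key relation for every other twin
  have hrel : ∀ v ∈ T, v ≠ u → U u u - U u v = c := by
    intro v hvT hvu
    have huv : u ≠ v := fun h => hvu h.symm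
    -- degrees are equal
    have hsum_eq : ∑ j, A u j = ∑ j, A v j := by
      refine Fintype.sum_equiv (Equiv.swap u v) _ _ (fun j => ?_)
      by_cases hju : j = u
      · rw [hju, Equiv.swap_apply_left, hloop u huT, hloop v hvT]
      · by_cases hjv : j = v
        · rw [hjv, Equiv.swap_apply_right]
          exact hA.apply v u
        · rw [Equiv.swap_apply_of_ne_of_ne hju hjv,
            htwin u huT v hvT huv j hju hjv]
    have hdeg_eq : deg u = deg v := by
      rw [hdeg u, hdeg v, hloop u huT, hloop v hvT, hsum_eq]
    -- the eigenvector
    set x : V → ℂ := Pi.single u 1 - Pi.single v 1 with hxdef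
    have hMx : M.mulVec x = θ • x := by
      funext w
      have hL : M.mulVec x w = M w u - M w v := by
        rw [hxdef, Matrix.mulVec_sub, Matrix.mulVec_single, Matrix.mulVec_single]
        simp
      have hxw : x w = (Pi.single u 1 : V → ℂ) w - (Pi.single v 1 : V → ℂ) w := by
        rw [hxdef, Pi.sub_apply]
      by_cases hwu : w = u
      · rw [Pi.smul_apply, hL, hxw, hwu, Pi.single_eq_same, Pi.single_eq_of_ne huv,
          hMentry u u, hMentry u v, if_pos rfl, if_neg huv, hloop u huT,
          hedge u huT v hvT huv, hθdef, smul_eq_mul]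
        push_cast
        ring
      · by_cases hwv : w = v
        · rw [Pi.smul_apply, hL, hxw, hwv, Pi.single_eq_same, Pi.single_eq_of_ne hvu,
            hMentry v u, hMentry v v, if_neg hvu, if_pos rfl, hloop v hvT,
            hedge v hvT u huT hvu, ← hdeg_eq, hθdef, smul_eq_mul]
          push_cast
          ring
        · rw [Pi.smul_apply, hL, hxw, Pi.single_eq_of_ne hwu, Pi.single_eq_of_ne hwv,
            hMentry w u, hMentry w v, if_neg hwu, if_neg hwv,
            ← hA.apply w u, htwin u huT v hvT huv w hwu hwv, hA.apply w v]
          simp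
    have hSx : S.mulVec x = ((Complex.I * (t : ℂ)) * θ) • x := by
      rw [hSdef, Matrix.smul_mulVec, hMx, smul_smul]
    have hUx := stmt6_exp_mulVec_eigen S x _ hSx
    have hUxu := congrFun hUx u
    have hLu : (U.mulVec x) u = U u u - U u v := by
      rw [hxdef, Matrix.mulVec_sub, Matrix.mulVec_single, Matrix.mulVec_single]
      simp
    have hxu : x u = 1 := by
      rw [hxdef]
      simp [Pi.single_eq_of_ne huv]
    rw [← hUdef] at hUxu
    rw [hLu] at hUxu
    rw [hUxu, Pi.smul_apply, hxu, smul_eq_mul, mul_one, hcdef]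
  -- row norm is 1
  have hrow : ∑ w, Complex.normSq (U u w) = 1 := by
    have h1 := stmt6_unitary S hSH
    have h2 := congrArg (fun N => N u u) h1
    simp only [Matrix.mul_apply, Matrix.conjTranspose_apply, Matrix.one_apply_eq] at h2
    have h3 : (∑ j, ((Complex.normSq (U u j) : ℝ) : ℂ)) = 1 := by
      rw [← h2, ← hUdef]
      refine Finset.sum_congr rfl (fun j _ => ?_)
      rw [← Complex.mul_conj]
      rfl
    have h4 : (((∑ j, Complex.normSq (U u j) : ℝ)) : ℂ) = ((1:ℝ) : ℂ) := by
      push_cast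
      simpa using h3
    exact_mod_cast h4
  -- put the estimate together
  obtain ⟨v, hvT, hvu⟩ := T.exists_mem_ne (by omega) u
  set x0 : ℝ := ‖U u u‖ with hx0def
  set d : ℝ := ‖U u u - c‖ with hddef
  have hx0nn : 0 ≤ x0 := norm_nonneg _
  have hdnn : 0 ≤ d := norm_nonneg _
  have htri : 1 ≤ x0 + d := by
    have h1 : c = U u u + (c - U u u) := by ring
    have h2 : ‖c‖ ≤ x0 + d := by
      calc ‖c‖ = ‖U u u + (c - U u u)‖ := by rw [← h1]
        _ ≤ ‖U u u‖ + ‖c - U u u‖ := norm_add_le _ _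
        _ = x0 + d := by rw [hx0def, hddef, norm_sub_rev c (U u u)]
    rw [hcabs] at h2
    exact h2
  have hcard1 : (1:ℕ) ≤ T.card := by omega
  have hmain : x0 ^ 2 + ((T.card : ℝ) - 1) * d ^ 2 ≤ 1 := by
    have hsub : insert u (T.erase u) ⊆ Finset.univ := Finset.subset_univ _
    have hle := Finset.sum_le_sum_of_subset_of_nonneg hsub
      (fun i _ _ => Complex.normSq_nonneg (U u i))
    rw [Finset.sum_insert (Finset.notMem_erase u T), hrow] at hle
    have heach : ∀ w ∈ T.erase u, Complex.normSq (U u w) = d ^ 2 := by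
      intro w hw
      obtain ⟨hwu, hwT⟩ := Finset.mem_erase.mp hw
      have h5 := hrel w hwT hwu
      have h6 : U u w = U u u - c := by
        have := sub_eq_iff_eq_add.mp h5
        linear_combination -h5 + this - this
      rw [h6, hddef, ← Complex.sq_norm]
    rw [Finset.sum_congr rfl heach, Finset.sum_const, nsmul_eq_mul,
      Finset.card_erase_of_mem huT] at hle
    have hcast : ((T.card - 1 : ℕ) : ℝ) = (T.card : ℝ) - 1 := by
      rw [Nat.cast_sub hcard1]; norm_num
    rw [hcast] at hle
    have hx0sq : Complex.normSq (U u u) = x0 ^ 2 := by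
      rw [hx0def, ← Complex.sq_norm]
    linarith [hle, hx0sq.symm.le, hx0sq.le]
  have hk : (2:ℝ) ≤ (T.card : ℝ) := by exact_mod_cast hT
  have hkpos : (0:ℝ) < (T.card : ℝ) := by linarith
  rcases le_or_gt 1 x0 with h1 | h1
  · have : 0 < 2 / (T.card : ℝ) := by positivity
    calc (1:ℝ) - 2 / (T.card : ℝ) ≤ 1 := by linarith
      _ ≤ x0 := h1
  · have hs : 0 < 1 - x0 := by linarith
    have hds : 1 - x0 ≤ d := by linarith
    rw [sub_le_comm, le_div_iff₀ hkpos]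
    nlinarith [hmain, hds, hs, hk, mul_le_mul hds hds (le_of_lt hs) hdnn]
end

section
/- If H is a real symmetric matrix, u is periodic at u with minimum period ρ > 0 (i.e., |exp(iρH)_{u,u}| = 1), then |exp(i(t+ρ)H)_{u,u}| = |exp(itH)_{u,u}| for all t; consequently inf_{t>0}|exp(itH)_{u,u}| = min_{t ∈ [0,ρ]} |exp(itH)_{u,u}|, and u is tightly sedentary (the infimum is attained and positive) if and only if exp(itH)_{u,u} ≠ 0 for all t ∈ [0,ρ]. -/
open Complex Matrix

/-- If `u` is periodic with minimum period `ρ > 0` (i.e. `|exp(iρH)_{u,u}| = 1`), then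
`|exp(i(t+ρ)H)_{u,u}| = |exp(itH)_{u,u}|` for all `t`, the infimum over `t > 0` equals
the minimum over `[0, ρ]`, and `u` is tightly sedentary (infimum attained and positive)
iff `exp(itH)_{u,u} ≠ 0` for all `t ∈ [0, ρ]`. -/
theorem stmt_8 (n : ℕ)
    (H : Matrix (Fin n) (Fin n) ℂ) (hH : H.IsHermitian)
    (hHreal : ∀ i j, (H i j).im = 0)
    (u : Fin n) (ρ : ℝ) (hρ : 0 < ρ)
    (f : ℝ → ℝ)
    (hf : ∀ t, f t = ‖(NormedSpace.exp ((Complex.I * t) • H)) u u‖)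
    (hper : f ρ = 1)
    (hmin : ∀ s, 0 < s → s < ρ → f s ≠ 1) :
    (∀ t, f (t + ρ) = f t) ∧
    sInf (f '' Set.Ioi 0) = sInf (f '' Set.Icc 0 ρ) ∧
    (((∃ t₀ > 0, f t₀ = sInf (f '' Set.Ioi 0)) ∧ 0 < sInf (f '' Set.Ioi 0)) ↔
      ∀ t ∈ Set.Icc (0 : ℝ) ρ,
        (NormedSpace.exp ((Complex.I * t) • H)) u u ≠ 0) := by
  -- Abbreviation for the unitary propagator
  set U : ℝ → Matrix (Fin n) (Fin n) ℂ :=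
    fun t => NormedSpace.exp ((Complex.I * t) • H) with hU
  -- multiplicativity: U (s + t) = U s * U t
  have hmul : ∀ s t : ℝ, U (s + t) = U s * U t := by
    intro s t
    rw [hU]
    simp only
    rw [← Matrix.exp_add_of_commute]
    · congr 1
      rw [← add_smul]
      push_cast
      ring_nf
    · exact ((Commute.refl H).smul_left _).smul_right _
  -- unitarity: (U t)ᴴ * U t = 1
  have hunit : ∀ t : ℝ, (U t)ᴴ * U t = 1 := by
    intro t
    rw [hU]
    simp only
    rw [← Matrix.exp_conjTranspose, conjTranspose_smul, hH.eq, ← Matrix.exp_add_of_commute]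
    · rw [← add_smul]
      have h0 : star (Complex.I * (t : ℂ)) + Complex.I * t = 0 := by simp
      rw [h0, zero_smul, NormedSpace.exp_zero]
    · exact ((Commute.refl H).smul_left _).smul_right _
  have habsρ : ‖U ρ u u‖ = 1 := by rw [hf] at hper; exact hper
  -- column u of U ρ is concentrated at u
  have hcol : ∀ k : Fin n, k ≠ u → U ρ k u = 0 := by
    have hentry := congrArg (fun M => M u u) (hunit ρ)
    simp only [Matrix.mul_apply, Matrix.conjTranspose_apply, Matrix.one_apply_eq] at hentry
    have hsum : (∑ k : Fin n, (Complex.normSq (U ρ k u) : ℂ)) = 1 := by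
      rw [← hentry]
      refine Finset.sum_congr rfl fun k _ => ?_
      rw [Complex.normSq_eq_conj_mul_self]
      rfl
    have hsumℝ : ∑ k : Fin n, Complex.normSq (U ρ k u) = 1 := by exact_mod_cast hsum
    have huu : Complex.normSq (U ρ u u) = 1 := by
      rw [← Complex.sq_norm, habsρ]; norm_num
    have hrest : ∑ k ∈ Finset.univ.erase u, Complex.normSq (U ρ k u) = 0 := by
      have := hsumℝ
      rw [← Finset.add_sum_erase _ _ (Finset.mem_univ u)] at this
      linarith
    intro k hk
    have hz := (Finset.sum_eq_zero_iff_of_nonneg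
      (fun i _ => Complex.normSq_nonneg (U ρ i u))).mp hrest k
      (Finset.mem_erase.mpr ⟨hk, Finset.mem_univ k⟩)
    exact Complex.normSq_eq_zero.mp hz
  -- the key periodicity property
  have key : ∀ t, f (t + ρ) = f t := by
    intro t
    rw [hf, hf]
    show ‖U (t + ρ) u u‖ = ‖U t u u‖
    rw [hmul t ρ, Matrix.mul_apply,
      Finset.sum_eq_single u (fun k _ hk => by rw [hcol k hk, mul_zero])
        (fun h => absurd (Finset.mem_univ u) h),
      norm_mul, habsρ, mul_one]
  have hfnonneg : ∀ t, 0 ≤ f t := fun t => by rw [hf]; exact norm_nonneg _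
  have hperiodic : Function.Periodic f ρ := key
  have hf0 : f 0 = f ρ := by simpa using (key 0).symm
  -- the two images coincide
  have himg : f '' Set.Ioi 0 = f '' Set.Icc 0 ρ := by
    apply Set.Subset.antisymm
    · rintro x ⟨t, _, rfl⟩
      obtain ⟨y, hy, hxy⟩ := hperiodic.exists_mem_Ico₀ hρ t
      exact ⟨y, ⟨hy.1, hy.2.le⟩, hxy.symm⟩
    · rintro x ⟨t, ht, rfl⟩
      rcases eq_or_lt_of_le ht.1 with h | h
      · exact ⟨ρ, hρ, by rw [← h, hf0]⟩
      · exact ⟨t, h, rfl⟩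
  have hbdd : BddBelow (f '' Set.Ioi 0) := by
    refine ⟨0, ?_⟩
    rintro x ⟨t, _, rfl⟩
    exact hfnonneg t
  have hbdd' : BddBelow (f '' Set.Icc 0 ρ) := himg ▸ hbdd
  refine ⟨key, by rw [himg], ?_⟩
  constructor
  · rintro ⟨⟨t₀, ht₀, hft₀⟩, hpos⟩ t ht
    have hfne : f t ≠ 0 := by
      rcases eq_or_lt_of_le ht.1 with h | h
      · rw [← h, hf0, hper]; norm_num
      · have hle : sInf (f '' Set.Ioi 0) ≤ f t := csInf_le hbdd ⟨t, h, rfl⟩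
        exact (lt_of_lt_of_le hpos hle).ne'
    rw [hf] at hfne
    intro h
    exact hfne (by rw [h]; simp)
  · intro hne
    -- continuity of f
    have hcont : Continuous f := by
      have hfeq : f = fun t : ℝ => ‖(NormedSpace.exp ((Complex.I * t) • H)) u u‖ :=
        funext hf
      rw [hfeq]
      letI : NormedRing (Matrix (Fin n) (Fin n) ℂ) := Matrix.linftyOpNormedRing
      letI : NormedAlgebra ℂ (Matrix (Fin n) (Fin n) ℂ) := Matrix.linftyOpNormedAlgebra
      letI : NormedAlgebra ℚ (Matrix (Fin n) (Fin n) ℂ) := Matrix.linftyOpNormedAlgebra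
      have h1 : Continuous fun t : ℝ => ((Complex.I * t) • H) := by fun_prop
      have h2 := NormedSpace.exp_continuous (𝔸 := Matrix (Fin n) (Fin n) ℂ)
      have h3 : Continuous fun t : ℝ => NormedSpace.exp ((Complex.I * t) • H) := h2.comp h1
      exact continuous_norm.comp (h3.matrix_elem u u)
    obtain ⟨t₀, ht₀mem, ht₀min⟩ := isCompact_Icc.exists_isMinOn
      (Set.nonempty_Icc.mpr hρ.le) hcont.continuousOn
    have hinf : sInf (f '' Set.Ioi 0) = f t₀ := by
      rw [himg]
      apply le_antisymm
      · exact csInf_le hbdd' ⟨t₀, ht₀mem, rfl⟩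
      · refine le_csInf ((Set.nonempty_Icc.mpr hρ.le).image f) ?_
        rintro x ⟨s, hs, rfl⟩
        exact ht₀min hs
    have hfne : f t₀ ≠ 0 := by
      have := hne t₀ ht₀mem
      rw [hf]
      simpa using this
    refine ⟨?_, by rw [hinf]; exact lt_of_le_of_ne (hfnonneg t₀) (Ne.symm hfne)⟩
    rcases eq_or_lt_of_le ht₀mem.1 with h | h
    · exact ⟨ρ, hρ, by rw [hinf, ← h, hf0]⟩
    · exact ⟨t₀, h, hinf.symm⟩
end

section
/- Let Y = K_m ∨ X be the join of K_m (m ≥ 1) with a simple positively weighted graph X on n ≥ 2 vertices, with Laplacian L. Then for any vertex u of K_m, U_L(t)_{u,u} = 1/(m+n) + ((m+n−1)/(m+n)) e^{it(m+n)}, and hence |U_L(t)_{u,u}| ≥ 1 − 2/(m+n) for all t, with equality if and only if t = jπ/(m+n) for some odd integer j. -/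
open Complex Matrix


lemma exp_mulVec_eigen {ι : Type*} [Fintype ι] [DecidableEq ι]
    (A : Matrix ι ι ℂ) (v : ι → ℂ) (c : ℂ) (h : A *ᵥ v = c • v) :
    (NormedSpace.exp A) *ᵥ v = Complex.exp c • v := by
  letI : SeminormedRing (Matrix ι ι ℂ) := Matrix.linftyOpSemiNormedRing
  letI : NormedRing (Matrix ι ι ℂ) := Matrix.linftyOpNormedRing
  letI : NormedAlgebra ℂ (Matrix ι ι ℂ) := Matrix.linftyOpNormedAlgebra
  have hpow : ∀ k : ℕ, A ^ k *ᵥ v = c ^ k • v := by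
    intro k
    induction k with
    | zero => simp
    | succ k ih =>
      rw [pow_succ, ← Matrix.mulVec_mulVec, h, Matrix.mulVec_smul, ih,
        smul_smul, pow_succ, mul_comm]
  have hf : Continuous (fun M : Matrix ι ι ℂ => M *ᵥ v) := by
    apply continuous_pi; intro x
    simp only [Matrix.mulVec, dotProduct]
    exact continuous_finset_sum _ fun y _ =>
      by fun_prop
  have hsum : Summable fun k : ℕ => (Nat.factorial k : ℂ)⁻¹ • A ^ k :=
    NormedSpace.expSeries_summable' (𝕂 := ℂ) A
  have hmap := hsum.hasSum.map
    ({ toFun := fun M : Matrix ι ι ℂ => M *ᵥ v,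
       map_zero' := Matrix.zero_mulVec v,
       map_add' := fun M N => Matrix.add_mulVec M N v } : Matrix ι ι ℂ →+ (ι → ℂ)) hf
  simp only [AddMonoidHom.coe_mk, ZeroHom.coe_mk, Function.comp_def,
    Matrix.smul_mulVec, hpow] at hmap
  have hcsum : Summable fun k : ℕ => (Nat.factorial k : ℂ)⁻¹ • c ^ k :=
    NormedSpace.expSeries_summable' (𝕂 := ℂ) c
  have h2 : HasSum (fun k : ℕ => (Nat.factorial k : ℂ)⁻¹ • c ^ k • v)
      ((∑' k : ℕ, (Nat.factorial k : ℂ)⁻¹ • c ^ k) • v) := by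
    simpa only [smul_assoc] using hcsum.hasSum.smul_const v
  have heq := hmap.unique h2
  rw [NormedSpace.exp_eq_tsum ℂ]
  show (∑' k : ℕ, (Nat.factorial k : ℂ)⁻¹ • A ^ k) *ᵥ v = _
  rw [heq, Complex.exp_eq_exp_ℂ, NormedSpace.exp_eq_tsum ℂ]


lemma key_abs (Nr θ : ℝ) (h3 : 3 ≤ Nr) :
    (1 - 2/Nr ≤ ‖((1/Nr : ℝ):ℂ) + (((Nr-1)/Nr : ℝ):ℂ) * Complex.exp ((θ:ℂ) * Complex.I)‖) ∧
    (‖((1/Nr : ℝ):ℂ) + (((Nr-1)/Nr : ℝ):ℂ) * Complex.exp ((θ:ℂ) * Complex.I)‖ = 1 - 2/Nr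
      ↔ Real.cos θ = -1) := by
  have hNr : (0:ℝ) < Nr := by linarith
  set a : ℝ := 1/Nr with ha
  set c : ℝ := (Nr-1)/Nr with hc
  have hz : ((a:ℂ)) + (c:ℂ) * Complex.exp ((θ:ℂ) * Complex.I)
      = ((a + c * Real.cos θ : ℝ):ℂ) + ((c * Real.sin θ : ℝ):ℂ) * Complex.I := by
    rw [Complex.exp_mul_I, ← Complex.ofReal_cos, ← Complex.ofReal_sin]
    push_cast
    ring
  have hb : 0 < 1 - 2/Nr := by
    have : 2/Nr ≤ 2/3 := by
      apply div_le_div_of_nonneg_left (by norm_num) (by norm_num) h3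
    linarith
  have hs : Real.sin θ ^2 = 1 - Real.cos θ ^2 := by
    have := Real.sin_sq_add_cos_sq θ; nlinarith
  have hca : c - a = 1 - 2/Nr := by rw [ha, hc]; field_simp; ring
  have hX : (a + c * Real.cos θ)^2 + (c * Real.sin θ)^2
      = (1 - 2/Nr)^2 + 2*a*c*(Real.cos θ + 1) := by
    linear_combination c^2*hs + (c - a + (1 - 2/Nr)) * hca
  have hac : 0 < a * c := by
    apply mul_pos
    · rw [ha]; positivity
    · rw [hc]; apply div_pos (by linarith) hNr
  have hcos1 : -1 ≤ Real.cos θ := Real.neg_one_le_cos θ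
  have hX0 : 0 ≤ (1 - 2/Nr)^2 + 2*a*c*(Real.cos θ + 1) := by nlinarith
  have habs : ‖((a:ℝ):ℂ) + ((c:ℝ):ℂ) * Complex.exp ((θ:ℂ) * Complex.I)‖
      = Real.sqrt ((1 - 2/Nr)^2 + 2*a*c*(Real.cos θ + 1)) := by
    rw [hz, Complex.norm_def, Complex.normSq_add_mul_I, hX]
  refine ⟨?_, ?_, ?_⟩
  · rw [habs, Real.le_sqrt hb.le]
    nlinarith
    exact hX0
  · intro h
    rw [habs] at h
    have h2 := congrArg (fun x => x^2) h
    simp only [Real.sq_sqrt hX0] at h2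
    nlinarith
  · intro h
    rw [habs, show (1 - 2/Nr)^2 + 2*a*c*(Real.cos θ + 1) = (1-2/Nr)^2 by rw [h]; ring,
      Real.sqrt_sq hb.le]

/-- For the join `K_m ∨ X` (`m ≥ 1`, `X` a simple positively weighted graph on `n ≥ 2`
vertices), with Laplacian `L`, any vertex `u` of `K_m` satisfies
`U_L(t)_{u,u} = 1/(m+n) + ((m+n−1)/(m+n)) e^{it(m+n)}`, hence
`|U_L(t)_{u,u}| ≥ 1 − 2/(m+n)`, with equality iff `t = jπ/(m+n)` for some odd `j`. -/
theorem stmt_11 (m n : ℕ) (hm : 1 ≤ m) (hn : 2 ≤ n)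
    (W : Matrix (Fin n) (Fin n) ℝ) (hWs : W.IsSymm)
    (hW0 : ∀ i, W i i = 0) (hWpos : ∀ i j, 0 ≤ W i j)
    (Adj : Matrix (Fin m ⊕ Fin n) (Fin m ⊕ Fin n) ℝ)
    (hAdj : Adj = Matrix.fromBlocks
      (Matrix.of fun i j : Fin m => if i = j then 0 else 1)
      (Matrix.of fun _ _ => 1) (Matrix.of fun _ _ => 1) W)
    (L : Matrix (Fin m ⊕ Fin n) (Fin m ⊕ Fin n) ℂ)
    (hL : L = (Matrix.diagonal (fun x => ∑ y, Adj x y) - Adj).map Complex.ofReal)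
    (i : Fin m) (t : ℝ) :
    (NormedSpace.exp ((Complex.I * t) • L)) (Sum.inl i) (Sum.inl i) =
        1 / ((m : ℂ) + n) + (((m : ℂ) + n - 1) / ((m : ℂ) + n)) *
          Complex.exp (Complex.I * t * ((m : ℕ) + n)) ∧
    1 - 2 / ((m : ℝ) + n) ≤
        ‖(NormedSpace.exp ((Complex.I * t) • L)) (Sum.inl i) (Sum.inl i)‖ ∧
    (‖(NormedSpace.exp ((Complex.I * t) • L)) (Sum.inl i) (Sum.inl i)‖ =
        1 - 2 / ((m : ℝ) + n) ↔
      ∃ j : ℤ, Odd j ∧ t = j * Real.pi / ((m : ℝ) + n)) := by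
  have hpart1 : (NormedSpace.exp ((Complex.I * t) • L)) (Sum.inl i) (Sum.inl i) =
      1 / ((m : ℂ) + n) + (((m : ℂ) + n - 1) / ((m : ℂ) + n)) *
        Complex.exp (Complex.I * t * ((m : ℕ) + n)) := by
    set u : Fin m ⊕ Fin n := Sum.inl i with hu
    set N : ℂ := (m : ℂ) + n with hNdef
    have hNne : N ≠ 0 := by
      rw [hNdef]
      have h0 : ((m+n:ℕ):ℂ) ≠ 0 := Nat.cast_ne_zero.2 (by omega)
      push_cast at h0
      exact h0
    -- row sums of L are zero
    have h1 : L *ᵥ (fun _ => (1:ℂ)) = (0:ℂ) • (fun _ => (1:ℂ)) := by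
      funext x
      simp only [hL, Matrix.mulVec, dotProduct, Matrix.map_apply, Matrix.sub_apply,
        mul_one, zero_smul, Pi.zero_apply]
      push_cast
      simp only [← Complex.ofReal_sub, ← Complex.ofReal_sum]
      norm_cast
      rw [Finset.sum_sub_distrib]
      simp [Matrix.diagonal_apply, Finset.sum_ite_eq]
    -- degree of u
    have hdeg : (∑ y, Adj u y) = (m : ℝ) + n - 1 := by
      subst hAdj
      rw [hu]
      rw [Fintype.sum_sum_type]
      simp only [Matrix.fromBlocks_apply₁₁, Matrix.fromBlocks_apply₁₂, Matrix.of_apply]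
      rw [Finset.sum_const, Finset.card_univ, Fintype.card_fin]
      have : ∑ j : Fin m, (if i = j then (0:ℝ) else 1)
          = ∑ j : Fin m, ((1:ℝ) - if i = j then 1 else 0) := by
        apply Finset.sum_congr rfl; intro j _; split <;> ring
      rw [this, Finset.sum_sub_distrib, Finset.sum_const, Finset.card_univ, Fintype.card_fin,
        Finset.sum_ite_eq]
      simp
      ring
    -- column u of L
    set e : (Fin m ⊕ Fin n) → ℂ := Pi.single u 1 with he
    have h2 : L *ᵥ e = N • e - (fun _ => (1:ℂ)) := by
      rw [he]
      rw [Matrix.mulVec_single]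
      funext x
      simp only [MulOpposite.op_one, one_smul, Matrix.col_apply, mul_one, Pi.sub_apply, Pi.smul_apply, smul_eq_mul]
      rcases eq_or_ne x u with rfl | hx
      · rw [hL]
        simp only [Matrix.map_apply, Matrix.sub_apply, Matrix.diagonal_apply_eq, hdeg]
        rw [Pi.single_eq_same]
        have : Adj u u = 0 := by subst hAdj; rw [hu]; simp
        rw [this, hNdef]
        push_cast
        ring
      · rw [hL]
        simp only [Matrix.map_apply, Matrix.sub_apply, Matrix.diagonal_apply_ne _ hx]
        rw [Pi.single_eq_of_ne hx]
        have : Adj x u = 1 := by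
          subst hAdj; rw [hu]
          rcases x with xl | xr
          · have : xl ≠ i := fun h => hx (by rw [h, hu])
            simp [Matrix.fromBlocks_apply₁₁, this]
          · simp [Matrix.fromBlocks_apply₂₁]
        rw [this]
        push_cast
        ring
    have hw : L *ᵥ (e - N⁻¹ • fun _ => (1:ℂ)) = N • (e - N⁻¹ • fun _ => (1:ℂ)) := by
      rw [Matrix.mulVec_sub, Matrix.mulVec_smul, h1, h2, zero_smul, smul_zero, sub_zero,
        smul_sub, smul_smul, mul_inv_cancel₀ hNne, one_smul]
    set A := (Complex.I * t) • L with hA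
    have hA1 : A *ᵥ (fun _ => (1:ℂ)) = (0:ℂ) • (fun _ => (1:ℂ)) := by
      rw [hA, Matrix.smul_mulVec, h1]
      simp
    have hAw : A *ᵥ (e - N⁻¹ • fun _ => (1:ℂ))
        = (Complex.I * t * N) • (e - N⁻¹ • fun _ => (1:ℂ)) := by
      rw [hA, Matrix.smul_mulVec, hw, smul_smul]
    have E1 := exp_mulVec_eigen A _ _ hA1
    have E2 := exp_mulVec_eigen A _ _ hAw
    have hsplit : e = N⁻¹ • (fun _ => (1:ℂ)) + (e - N⁻¹ • fun _ => (1:ℂ)) := by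
      module
    have hmain : NormedSpace.exp A *ᵥ e
        = Complex.exp 0 • (N⁻¹ • fun _ => (1:ℂ))
          + Complex.exp (Complex.I * t * N) • (e - N⁻¹ • fun _ => (1:ℂ)) := by
      conv_lhs => rw [hsplit]
      rw [Matrix.mulVec_add, Matrix.mulVec_smul, E1, E2, smul_comm]
    have hfin : (NormedSpace.exp A *ᵥ e) u = NormedSpace.exp A u u := by
      rw [he, Matrix.mulVec_single]
      simp
    have hval := congrFun hmain u
    rw [hfin] at hval
    simp only [Pi.add_apply, Pi.smul_apply, Pi.sub_apply, he, Pi.single_eq_same,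
      smul_eq_mul, Complex.exp_zero, one_mul, mul_one] at hval
    rw [hval, hNdef]
    have harg : Complex.I * ↑t * (((m:ℕ):ℂ) + ((n:ℕ):ℂ)) = Complex.I * ↑t * ((m:ℂ) + n) := by
      push_cast
      ring
    rw [harg]
    have hN' : ((m:ℂ)+n) ≠ 0 := hNne
    rw [div_eq_mul_inv, div_eq_mul_inv, sub_mul, mul_inv_cancel₀ hN']
    ring
  set Nr : ℝ := (m : ℝ) + n with hNr
  have hNr3 : 3 ≤ Nr := by
    have h3 : (3:ℕ) ≤ m + n := by omega
    rw [hNr]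
    exact_mod_cast h3
  have hNr0 : Nr ≠ 0 := by rw [hNr]; positivity
  have hform : 1 / ((m : ℂ) + n) + (((m : ℂ) + n - 1) / ((m : ℂ) + n)) *
        Complex.exp (Complex.I * t * ((m : ℕ) + n))
      = ((1/Nr : ℝ):ℂ) + (((Nr-1)/Nr : ℝ):ℂ) * Complex.exp ((↑(t*Nr):ℂ) * Complex.I) := by
    have harg : (Complex.I * t * (((m:ℕ):ℂ) + ((n:ℕ):ℂ))) = ((t*Nr : ℝ):ℂ) * Complex.I := by
      rw [hNr]; push_cast; ring
    rw [harg, hNr]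
    push_cast
    ring
  obtain ⟨k1, k2⟩ := key_abs Nr (t*Nr) hNr3
  have hcos : Real.cos (t*Nr) = -1 ↔ ∃ j : ℤ, Odd j ∧ t = j * Real.pi / Nr := by
    rw [Real.cos_eq_neg_one_iff]
    constructor
    · rintro ⟨k, hk⟩
      refine ⟨2*k+1, ⟨k, by ring⟩, ?_⟩
      rw [eq_div_iff hNr0]
      push_cast
      linarith
    · rintro ⟨j, ⟨k, hk⟩, ht⟩
      refine ⟨k, ?_⟩
      rw [ht, hk]
      field_simp
      push_cast
      ring
  refine ⟨hpart1, ?_, ?_⟩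
  · rw [hpart1, hform]
    exact k1
  · rw [hpart1, hform]
    exact k2.trans hcos
end

section
/- Let X be a simple positively weighted graph on n vertices and let u be an apex of the disconnected double cone O₂ ∨ X with Laplacian L. Then U_L(t)_{u,u} = 1/(n+2) + e^{itn}/2 + n e^{it(n+2)}/(2(n+2)), and |U_L(t)_{u,u}|² = (n² + 2n + 4 + h(t))/(2(n+2)²) where h(t) = n(n+2)cos(2t) + 2(n+2)cos(tn) + 2n cos(t(n+2)). -/
open Complex Matrix

lemma hasSum_exp_entry {m' : Type*} [Fintype m'] [DecidableEq m'] (M : Matrix m' m' ℂ) (a b : m') :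
    HasSum (fun k : ℕ => (((Nat.factorial k) : ℂ)⁻¹ • M ^ k) a b) ((NormedSpace.exp M) a b) := by
  letI : SeminormedRing (Matrix m' m' ℂ) := Matrix.linftyOpSemiNormedRing
  letI : NormedRing (Matrix m' m' ℂ) := Matrix.linftyOpNormedRing
  letI : NormedAlgebra ℂ (Matrix m' m' ℂ) := Matrix.linftyOpNormedAlgebra
  have hs : Summable (fun k : ℕ => (((Nat.factorial k)) : ℂ)⁻¹ • M ^ k) :=
    NormedSpace.expSeries_summable' M
  have h := hs.hasSum
  have he : NormedSpace.exp M = ∑' k : ℕ, (((Nat.factorial k)) : ℂ)⁻¹ • M ^ k :=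
    congrFun (NormedSpace.exp_eq_tsum ℂ) M
  rw [he]
  exact (Pi.hasSum.mp ((Pi.hasSum.mp h) a)) b

lemma pow_mulVec_eig {m' : Type*} [Fintype m'] [DecidableEq m'] (M : Matrix m' m' ℂ)
    (v : m' → ℂ) (μ : ℂ) (h : M *ᵥ v = μ • v) (k : ℕ) : (M ^ k) *ᵥ v = (μ ^ k) • v := by
  induction k with
  | zero => simp
  | succ k ih =>
      rw [pow_succ', ← Matrix.mulVec_mulVec, ih, Matrix.mulVec_smul, h, smul_smul, ← pow_succ]

lemma hasSum_c_exp (μ c : ℂ) :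
    HasSum (fun k : ℕ => ((Nat.factorial k : ℂ))⁻¹ • (c * μ ^ k)) (c * Complex.exp μ) := by
  have h : HasSum (fun k : ℕ => ((Nat.factorial k : ℂ))⁻¹ • μ ^ k) (Complex.exp μ) := by
    rw [Complex.exp_eq_exp_ℂ, NormedSpace.exp_eq_tsum ℂ]
    exact (NormedSpace.expSeries_summable' μ).hasSum
  have := h.mul_left c
  simpa [smul_eq_mul, mul_comm, mul_left_comm, mul_assoc] using this

lemma real_id2 (m a b c d e : ℝ) (he : e * (m+2) = 1)
    (h1 : b^2 + a^2 = 1) (h2 : d^2 + c^2 = 1) :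
    (e + a/2 + m*c*e/2)^2 + (b/2 + m*d*e/2)^2 =
    (m^2 + 2*m + 4 + (m*(m+2)*(c*a + d*b) + 2*(m+2)*a + 2*m*c)) * (2⁻¹ * e^2) := by
  linear_combination (1/4)*h1 + (m^2*e^2/4)*h2 +
    (-(1+e*(m+2))/4 - e*a - m*e*(a*c+b*d)/2) * he

/-- For an apex `u` of the disconnected double cone `O₂ ∨ X` (`X` simple positively
weighted on `n` vertices) with Laplacian `L`:
`U_L(t)_{u,u} = 1/(n+2) + e^{itn}/2 + n e^{it(n+2)}/(2(n+2))`, and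
`|U_L(t)_{u,u}|² = (n² + 2n + 4 + h(t))/(2(n+2)²)` where
`h(t) = n(n+2)cos(2t) + 2(n+2)cos(tn) + 2n cos(t(n+2))`. -/
theorem stmt_12 (n : ℕ) (hn : 1 ≤ n)
    (W : Matrix (Fin n) (Fin n) ℝ) (hWs : W.IsSymm)
    (hW0 : ∀ i, W i i = 0) (hWpos : ∀ i j, 0 ≤ W i j)
    (Adj : Matrix (Fin 2 ⊕ Fin n) (Fin 2 ⊕ Fin n) ℝ)
    (hAdj : Adj = Matrix.fromBlocks 0
      (Matrix.of fun _ _ => 1) (Matrix.of fun _ _ => 1) W)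
    (L : Matrix (Fin 2 ⊕ Fin n) (Fin 2 ⊕ Fin n) ℂ)
    (hL : L = (Matrix.diagonal (fun x => ∑ y, Adj x y) - Adj).map Complex.ofReal)
    (i : Fin 2) (t : ℝ) :
    (NormedSpace.exp ((Complex.I * t) • L)) (Sum.inl i) (Sum.inl i) =
        1 / ((n : ℂ) + 2) + Complex.exp (Complex.I * t * n) / 2 +
          (n : ℂ) * Complex.exp (Complex.I * t * ((n : ℕ) + 2)) / (2 * ((n : ℂ) + 2)) ∧
    ‖((NormedSpace.exp ((Complex.I * t) • L)) (Sum.inl i) (Sum.inl i))‖ ^ 2 =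
      ((n : ℝ) ^ 2 + 2 * n + 4 +
        ((n : ℝ) * (n + 2) * Real.cos (2 * t) + 2 * ((n : ℝ) + 2) * Real.cos (t * n) +
          2 * (n : ℝ) * Real.cos (t * (n + 2)))) / (2 * ((n : ℝ) + 2) ^ 2) := by
  have hn2 : ((n : ℂ) + 2) ≠ 0 := by
    have : ((n + 2 : ℕ) : ℂ) ≠ 0 := Nat.cast_ne_zero.mpr (by omega)
    push_cast at this; exact this
  have hn2R : ((n : ℝ) + 2) ≠ 0 := by positivity
  -- entries of L
  have hd : ∀ r, (∑ y, Adj r y) = Sum.elim (fun _ : Fin 2 => (n : ℝ)) (fun x => 2 + ∑ y, W x y) r := by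
    intro r
    cases r with
    | inl a => simp [hAdj, Fintype.sum_sum_type]
    | inr x => simp [hAdj, Fintype.sum_sum_type, Fin.sum_univ_two]
  have hL11 : ∀ a b : Fin 2, L (Sum.inl a) (Sum.inl b) = if a = b then (n : ℂ) else 0 := by
    intro a b
    rw [hL]
    by_cases h : a = b <;>
      simp [Matrix.map_apply, Matrix.diagonal_apply, hd, hAdj, h]
  have hL12 : ∀ (a : Fin 2) (x : Fin n), L (Sum.inl a) (Sum.inr x) = -1 := by
    intro a x
    rw [hL]
    simp [Matrix.map_apply, Matrix.diagonal_apply, hAdj]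
  have hL21 : ∀ (x : Fin n) (a : Fin 2), L (Sum.inr x) (Sum.inl a) = -1 := by
    intro x a
    rw [hL]
    simp [Matrix.map_apply, Matrix.diagonal_apply, hAdj]
  have hL22 : ∀ x y : Fin n, L (Sum.inr x) (Sum.inr y) =
      (if x = y then ((2 + ∑ z, W x z : ℝ) : ℂ) else 0) - ((W x y : ℝ) : ℂ) := by
    intro x y
    rw [hL]
    by_cases h : x = y <;>
      · simp [Matrix.map_apply, Matrix.sub_apply, Matrix.diagonal_apply, hd, hAdj, h,
          Fintype.sum_sum_type, Fin.sum_univ_two]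
        try push_cast
        try ring
  have hmul : ∀ (v : Fin 2 ⊕ Fin n → ℂ) (r), (L *ᵥ v) r =
      ∑ b : Fin 2, L r (Sum.inl b) * v (Sum.inl b) +
        ∑ y : Fin n, L r (Sum.inr y) * v (Sum.inr y) := by
    intro v r
    simp [Matrix.mulVec, dotProduct, Fintype.sum_sum_type]
  -- eigenvectors
  set v0 : Fin 2 ⊕ Fin n → ℂ := fun _ => 1 with hv0def
  set v1 : Fin 2 ⊕ Fin n → ℂ :=
    Sum.elim (fun j => if j = i then (1 : ℂ) else -1) (fun _ => 0) with hv1def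
  set v2 : Fin 2 ⊕ Fin n → ℂ := Sum.elim (fun _ => (n : ℂ)) (fun _ => -2) with hv2def
  have hv0 : L *ᵥ v0 = (0 : ℂ) • v0 := by
    funext r
    rw [hmul]
    cases r with
    | inl a =>
        simp [hL11, hL12, hv0def, Fin.sum_univ_two]
        all_goals fin_cases a <;> norm_num
    | inr x =>
        simp [hL21, hL22, hv0def, Fin.sum_univ_two, Finset.sum_sub_distrib,
          Finset.sum_ite_eq, Finset.sum_ite_eq']
        all_goals push_cast; ring
  have hv1 : L *ᵥ v1 = (n : ℂ) • v1 := by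
    funext r
    rw [hmul]
    cases r with
    | inl a =>
        simp [hL11, hL12, hv1def, Fin.sum_univ_two]
        all_goals fin_cases a <;> fin_cases i <;> norm_num
    | inr x =>
        simp [hL21, hL22, hv1def, Fin.sum_univ_two]
        all_goals fin_cases i <;> norm_num
  have hv2 : L *ᵥ v2 = ((n : ℂ) + 2) • v2 := by
    funext r
    rw [hmul]
    cases r with
    | inl a =>
        simp [hL11, hL12, hv2def, Fin.sum_univ_two, Finset.sum_const]
        all_goals fin_cases a <;> (push_cast; try ring)
    | inr x =>
        simp only [hL21, hL22, hv2def, Sum.elim_inl, Sum.elim_inr, Fin.sum_univ_two,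
          sub_mul, Finset.sum_sub_distrib, ite_mul, zero_mul, Finset.sum_ite_eq,
          Finset.sum_ite_eq', Finset.mem_univ, if_true, ← Finset.sum_mul,
          Pi.smul_apply, smul_eq_mul]
        push_cast
        ring
  -- the exponential entry as a series
  set M : Matrix (Fin 2 ⊕ Fin n) (Fin 2 ⊕ Fin n) ℂ := (Complex.I * t) • L with hMdef
  have hMeig : ∀ (v : Fin 2 ⊕ Fin n → ℂ) (μ : ℂ), L *ᵥ v = μ • v →
      M *ᵥ v = (Complex.I * t * μ) • v := by
    intro v μ h
    rw [hMdef, Matrix.smul_mulVec, h, smul_smul]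
  set c0 : ℂ := ((n : ℂ) + 2)⁻¹ with hc0
  set c1 : ℂ := 2⁻¹ with hc1
  set c2 : ℂ := (2 * ((n : ℂ) + 2))⁻¹ with hc2
  have hsingle : (Pi.single (Sum.inl i) (1 : ℂ)) = c0 • v0 + c1 • v1 + c2 • v2 := by
    funext r
    cases r with
    | inl a =>
        by_cases h : a = i <;>
          · simp [Pi.single_apply, hv0def, hv1def, hv2def, h, hc0, hc1, hc2]
            all_goals field_simp; try ring
    | inr x =>
        simp [Pi.single_apply, hv0def, hv1def, hv2def, hc0, hc1, hc2]
        all_goals field_simp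
  have hMk : ∀ k : ℕ, (M ^ k) (Sum.inl i) (Sum.inl i) =
      c0 * (Complex.I * t * 0) ^ k + c1 * (Complex.I * t * n) ^ k +
        c2 * (n : ℂ) * (Complex.I * t * ((n : ℂ) + 2)) ^ k := by
    intro k
    have h0 := pow_mulVec_eig M v0 _ (hMeig v0 0 hv0) k
    have h1 := pow_mulVec_eig M v1 _ (hMeig v1 _ hv1) k
    have h2 := pow_mulVec_eig M v2 _ (hMeig v2 _ hv2) k
    have : (M ^ k) (Sum.inl i) (Sum.inl i) = ((M ^ k) *ᵥ Pi.single (Sum.inl i) 1) (Sum.inl i) := by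
      simp [Matrix.mulVec_single]
    rw [this, hsingle, Matrix.mulVec_add, Matrix.mulVec_add, Matrix.mulVec_smul,
      Matrix.mulVec_smul, Matrix.mulVec_smul, h0, h1, h2]
    simp [hv0def, hv1def, hv2def, smul_smul]
    ring
  have hexp : (NormedSpace.exp M) (Sum.inl i) (Sum.inl i) =
      c0 * Complex.exp (Complex.I * t * 0) + c1 * Complex.exp (Complex.I * t * n) +
        c2 * (n : ℂ) * Complex.exp (Complex.I * t * ((n : ℂ) + 2)) := by
    have hA := hasSum_exp_entry M (Sum.inl i) (Sum.inl i)
    have hB := ((hasSum_c_exp (Complex.I * t * 0) c0).add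
      (hasSum_c_exp (Complex.I * t * n) c1)).add
      (hasSum_c_exp (Complex.I * t * ((n : ℂ) + 2)) (c2 * (n : ℂ)))
    refine HasSum.unique hA ?_
    convert hB using 2 with k
    rw [Matrix.smul_apply, hMk k]
    simp [smul_eq_mul]
    ring
  have hfirst : (NormedSpace.exp M) (Sum.inl i) (Sum.inl i) =
      1 / ((n : ℂ) + 2) + Complex.exp (Complex.I * t * n) / 2 +
        (n : ℂ) * Complex.exp (Complex.I * t * ((n : ℕ) + 2)) / (2 * ((n : ℂ) + 2)) := by
    rw [hexp]
    push_cast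
    rw [mul_zero, Complex.exp_zero]
    rw [hc0, hc1, hc2]
    field_simp
    try ring
  refine ⟨hfirst, ?_⟩
  rw [hfirst]
  -- second part
  have e1 : Complex.exp (Complex.I * (t:ℂ) * (n:ℂ)) =
      Complex.ofReal (Real.cos (t * n)) + Complex.ofReal (Real.sin (t * n)) * Complex.I := by
    rw [show Complex.I * (t:ℂ) * (n:ℂ) = ((t * (n:ℝ) : ℝ) : ℂ) * Complex.I by push_cast; ring,
      Complex.exp_mul_I, Complex.ofReal_cos, Complex.ofReal_sin]
  have e2 : Complex.exp (Complex.I * (t:ℂ) * ((n:ℂ) + 2)) =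
      Complex.ofReal (Real.cos (t * ((n:ℝ) + 2))) +
        Complex.ofReal (Real.sin (t * ((n:ℝ) + 2))) * Complex.I := by
    rw [show Complex.I * (t:ℂ) * ((n:ℂ)+2) = ((t * ((n:ℝ)+2) : ℝ) : ℂ) * Complex.I by
        push_cast; ring,
      Complex.exp_mul_I, Complex.ofReal_cos, Complex.ofReal_sin]
  rw [e1, e2]
  have hz : (1 / ((n:ℂ) + 2) +
      (Complex.ofReal (Real.cos (t*n)) + Complex.ofReal (Real.sin (t*n)) * Complex.I) / 2 +
      (n:ℂ) * (Complex.ofReal (Real.cos (t*((n:ℝ)+2))) +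
        Complex.ofReal (Real.sin (t*((n:ℝ)+2))) * Complex.I) / (2 * ((n:ℂ)+2))) =
      Complex.ofReal (((n:ℝ)+2)⁻¹ + Real.cos (t*(n:ℝ))/2 +
        (n:ℝ) * Real.cos (t*((n:ℝ)+2)) * ((n:ℝ)+2)⁻¹/2) +
      Complex.ofReal (Real.sin (t*(n:ℝ))/2 +
        (n:ℝ) * Real.sin (t*((n:ℝ)+2)) * ((n:ℝ)+2)⁻¹/2) * Complex.I := by
    push_cast
    field_simp
    ring
  have hden : ∀ N : ℝ, N / (2*((n:ℝ)+2)^2) = N * (2⁻¹ * (((n:ℝ)+2)⁻¹)^2) := by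
    intro N
    rw [div_eq_mul_inv, mul_inv, ← inv_pow]
  rw [hz, Complex.sq_norm, Complex.normSq_add_mul_I,
    show (2:ℝ)*t = t*((n:ℝ)+2) - t*(n:ℝ) by ring, Real.cos_sub, hden]
  exact real_id2 (n:ℝ) (Real.cos (t*(n:ℝ))) (Real.sin (t*(n:ℝ)))
    (Real.cos (t*((n:ℝ)+2))) (Real.sin (t*((n:ℝ)+2))) (((n:ℝ)+2)⁻¹)
    (inv_mul_cancel₀ hn2R) (Real.sin_sq_add_cos_sq _) (Real.sin_sq_add_cos_sq _)
end

section
/- Let u be a leaf of the star K_{1,n} with n ≥ 2, and A its adjacency matrix. Then |U_A(t)_{u,u}| ≥ 1 − 2/n for all t, with equality if and only if t = jπ/√n for some odd integer j. -/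
open Complex Matrix

theorem star_entry (n : ℕ) (hn : 2 ≤ n)
    (A : Matrix (Unit ⊕ Fin n) (Unit ⊕ Fin n) ℂ)
    (hA : A = Matrix.fromBlocks 0
      (Matrix.of fun _ _ => 1) (Matrix.of fun _ _ => 1) 0)
    (u : Fin n) (t : ℝ) :
    (NormedSpace.exp ((Complex.I * t) • A)) (Sum.inr u) (Sum.inr u)
      = ((((n : ℝ) - 1) + Real.cos (t * Real.sqrt n)) / n : ℝ) := by
  have hnR : (0 : ℝ) < n := by positivity
  have hn0 : (n : ℂ) ≠ 0 := Nat.cast_ne_zero.mpr (by omega)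
  have hA3 : A ^ 3 = (n : ℂ) • A := by
    subst hA
    ext (i|i) (j|j) <;>
      simp [pow_succ, Matrix.mul_apply, Fintype.sum_sum_type, Finset.mul_sum]
  have hrec : ∀ k : ℕ, A ^ (k + 3) = (n : ℂ) • A ^ (k + 1) := by
    intro k
    calc A ^ (k + 3) = A ^ k * A ^ 3 := by rw [pow_add]
    _ = (n : ℂ) • (A ^ k * A) := by rw [hA3, Matrix.mul_smul]
    _ = (n : ℂ) • A ^ (k + 1) := by rw [pow_succ]
  have hodd : ∀ m : ℕ, (A ^ (2 * m + 1)) (Sum.inr u) (Sum.inr u) = 0 := by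
    intro m
    induction m with
    | zero => simp [hA]
    | succ m ih =>
      have h2 : 2 * (m + 1) + 1 = (2 * m) + 3 := by ring
      rw [h2, hrec, Matrix.smul_apply]
      simp [ih]
  have heven : ∀ m : ℕ, (A ^ (2 * m + 2)) (Sum.inr u) (Sum.inr u) = (n : ℂ) ^ m := by
    intro m
    induction m with
    | zero =>
      subst hA
      simp [pow_succ, Matrix.mul_apply, Fintype.sum_sum_type]
    | succ m ih =>
      have h2 : 2 * (m + 1) + 2 = (2 * m + 1) + 3 := by ring
      rw [h2, hrec, Matrix.smul_apply]
      rw [show (2 * m + 1) + 1 = 2 * m + 2 from rfl, ih, smul_eq_mul]; ring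
  set M : Matrix (Unit ⊕ Fin n) (Unit ⊕ Fin n) ℂ := (Complex.I * t) • A with hM
  have hentry : HasSum (fun k : ℕ => ((Nat.factorial k : ℂ)⁻¹) * (M ^ k) (Sum.inr u) (Sum.inr u))
      ((NormedSpace.exp M) (Sum.inr u) (Sum.inr u)) := by
    letI : SeminormedRing (Matrix (Unit ⊕ Fin n) (Unit ⊕ Fin n) ℂ) := Matrix.linftyOpSemiNormedRing
    letI : NormedRing (Matrix (Unit ⊕ Fin n) (Unit ⊕ Fin n) ℂ) := Matrix.linftyOpNormedRing
    letI : NormedAlgebra ℂ (Matrix (Unit ⊕ Fin n) (Unit ⊕ Fin n) ℂ) := Matrix.linftyOpNormedAlgebra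
    have hsum : HasSum (fun k : ℕ => ((Nat.factorial k : ℂ)⁻¹) • M ^ k) (NormedSpace.exp M) :=
      NormedSpace.exp_series_hasSum_exp' M
    have := hsum.map
      ((Pi.evalAddMonoidHom (fun _ => ℂ) (Sum.inr u)).comp
        (Pi.evalAddMonoidHom (fun _ : Unit ⊕ Fin n => (Unit ⊕ Fin n) → ℂ) (Sum.inr u)))
      (by exact Continuous.comp (continuous_apply (Sum.inr u)) (continuous_apply (Sum.inr u)) :
        Continuous fun m : Matrix (Unit ⊕ Fin n) (Unit ⊕ Fin n) ℂ => m (Sum.inr u) (Sum.inr u))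
    convert this using 1
    · funext k; rfl
    · rfl
  set f : ℕ → ℂ := fun k => ((Nat.factorial k : ℂ)⁻¹) * (M ^ k) (Sum.inr u) (Sum.inr u) with hf
  have hMk : ∀ k : ℕ, (M ^ k) (Sum.inr u) (Sum.inr u)
      = (Complex.I * t) ^ k * (A ^ k) (Sum.inr u) (Sum.inr u) := by
    intro k
    rw [hM, smul_pow, Matrix.smul_apply, smul_eq_mul]
  set z : ℂ := (t : ℂ) * (Real.sqrt n : ℂ) with hz
  have hz2 : z ^ 2 = (t : ℂ) ^ 2 * n := by
    rw [hz, mul_pow]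
    congr 1
    norm_cast
    rw [Real.sq_sqrt hnR.le]
  have hcos := Complex.hasSum_cos z
  have hshift : HasSum
      (fun m : ℕ => (-1 : ℂ) ^ (m + 1) * z ^ (2 * (m + 1)) / ((2 * (m + 1)).factorial))
      (Complex.cos z - 1) := by
    refine (hasSum_nat_add_iff
      (f := fun m : ℕ => (-1 : ℂ) ^ m * z ^ (2 * m) / ((2 * m).factorial)) 1).mpr ?_
    simpa using hcos
  have key : ∀ m : ℕ,
      f (2 * (m + 1)) = ((-1 : ℂ) ^ (m + 1) * z ^ (2 * (m + 1)) / ((2 * (m + 1)).factorial)) / n := by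
    intro m
    have e1 : (A ^ (2 * (m + 1))) (Sum.inr u) (Sum.inr u) = (n : ℂ) ^ m := by
      rw [show 2 * (m + 1) = 2 * m + 2 by ring]; exact heven m
    have hK : ((2 * (m + 1)).factorial : ℂ) ≠ 0 := by exact_mod_cast (Nat.factorial_pos _).ne'
    simp only [hf, hMk, e1]
    rw [pow_mul, pow_mul, hz2, mul_pow, Complex.I_sq]
    field_simp
    ring
  have hFshift : HasSum (fun m : ℕ => f (2 * (m + 1))) ((Complex.cos z - 1) / n) := by
    have h := hshift.div_const (n : ℂ)
    have hfun : (fun m : ℕ => f (2 * (m + 1)))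
        = fun m : ℕ => ((-1 : ℂ) ^ (m + 1) * z ^ (2 * (m + 1)) / ((2 * (m + 1)).factorial)) / n := by
      funext m; exact key m
    rw [hfun]
    exact h
  have hF0 : f 0 = 1 := by simp [hf]
  have hFsum : HasSum (fun m : ℕ => f (2 * m)) (1 + (Complex.cos z - 1) / n) := by
    have := HasSum.zero_add (f := fun m : ℕ => f (2 * m)) hFshift
    simpa [hF0] using this
  have hOsum : HasSum (fun m : ℕ => f (2 * m + 1)) 0 := by
    have hfun : (fun m : ℕ => f (2 * m + 1)) = fun _ => (0 : ℂ) := by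
      funext m; simp [hf, hMk, hodd m]
    rw [hfun]; exact hasSum_zero
  have htot : HasSum f (1 + (Complex.cos z - 1) / n + 0) := hFsum.even_add_odd hOsum
  have := hentry.unique htot
  rw [this]
  have hzr : z = ((t * Real.sqrt n : ℝ) : ℂ) := by push_cast [hz]; ring
  rw [hzr, ← Complex.ofReal_cos]
  push_cast
  field_simp
  ring

/-- For a leaf `u` of the star `K_{1,n}` (`n ≥ 2`) with adjacency matrix `A`,
`|U_A(t)_{u,u}| ≥ 1 − 2/n` for all `t`, with equality iff `t = jπ/√n` for odd `j`. -/
theorem stmt_14 (n : ℕ) (hn : 2 ≤ n)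
    (A : Matrix (Unit ⊕ Fin n) (Unit ⊕ Fin n) ℂ)
    (hA : A = Matrix.fromBlocks 0
      (Matrix.of fun _ _ => 1) (Matrix.of fun _ _ => 1) 0)
    (u : Fin n) (t : ℝ) :
    1 - 2 / (n : ℝ) ≤
      ‖(NormedSpace.exp ((Complex.I * t) • A)) (Sum.inr u) (Sum.inr u)‖ ∧
    (‖(NormedSpace.exp ((Complex.I * t) • A)) (Sum.inr u) (Sum.inr u)‖ =
        1 - 2 / (n : ℝ) ↔
      ∃ j : ℤ, Odd j ∧ t = j * Real.pi / Real.sqrt n) := by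
  have hnR : (0 : ℝ) < n := by positivity
  have hn2 : (2 : ℝ) ≤ n := by exact_mod_cast hn
  have hc0 : 0 < Real.sqrt n := Real.sqrt_pos.mpr hnR
  rw [star_entry n hn A hA u t]
  set c : ℝ := Real.sqrt n with hcdef
  set x : ℝ := t * c with hx
  have hcosge : -1 ≤ Real.cos x := Real.neg_one_le_cos x
  have hcosle : Real.cos x ≤ 1 := Real.cos_le_one x
  have hnum : (0 : ℝ) ≤ ((n : ℝ) - 1 + Real.cos x) := by linarith
  have hval : ‖(((((n : ℝ) - 1) + Real.cos x) / n : ℝ) : ℂ)‖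
      = (((n : ℝ) - 1) + Real.cos x) / n := by
    rw [Complex.norm_real, Real.norm_eq_abs, _root_.abs_of_nonneg (div_nonneg hnum hnR.le)]
  rw [hval]
  have hkey : ((n : ℝ) - 1 + Real.cos x) / n - (1 - 2 / n) = (Real.cos x + 1) / n := by
    field_simp
    ring
  constructor
  · have := div_nonneg (by linarith : (0 : ℝ) ≤ Real.cos x + 1) hnR.le
    linarith
  · constructor
    · intro h
      have hcosm : Real.cos x = -1 := by
        have h1 : (Real.cos x + 1) / n = 0 := by linarith
        have := (div_eq_zero_iff.mp h1).resolve_right (by exact_mod_cast hnR.ne')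
        linarith
      obtain ⟨k, hk⟩ := Real.cos_eq_neg_one_iff.mp hcosm
      refine ⟨2 * k + 1, ⟨k, by ring⟩, ?_⟩
      rw [eq_div_iff hc0.ne']
      push_cast
      rw [← hx, ← hk]
      ring
    · rintro ⟨j, ⟨k, hk⟩, rfl⟩
      have hxval : x = Real.pi + k * (2 * Real.pi) := by
        rw [hx]
        field_simp
        rw [hk]
        push_cast
        ring
      have hcosm : Real.cos x = -1 := Real.cos_eq_neg_one_iff.mpr ⟨k, hxval.symm⟩
      rw [hcosm]
      field_simp
      ring
end

section
/- Let w be the central vertex of K_{1,n} with n ≥ 2 and L the Laplacian. Then |U_L(t)_{w,w}| ≥ 1 − 2/(n+1) for all t, with equality if and only if t = jπ/(n+1) for some odd j. -/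
open Complex Matrix NormedSpace

lemma exp_smul_idem_s16 {A : Type*} [NormedRing A] [NormedAlgebra ℂ A] [CompleteSpace A]
    (Q : A) (hQ : Q * Q = Q) (c : ℂ) :
    NormedSpace.exp (c • Q) = 1 + (Complex.exp c - 1) • Q := by
  have hpow : ∀ k : ℕ, Q ^ (k + 1) = Q := by
    intro k; induction k with
    | zero => simp
    | succ k ih => rw [pow_succ, ih, hQ]
  have hs : Summable fun k : ℕ => (((k + 1).factorial : ℂ))⁻¹ * c ^ (k + 1) := by
    have := expSeries_summable' (𝕂 := ℂ) (x := c)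
    simpa [smul_eq_mul] using ((summable_nat_add_iff 1).mpr this)
  have hexpc : Complex.exp c = 1 + ∑' k : ℕ, (((k + 1).factorial : ℂ))⁻¹ * c ^ (k + 1) := by
    have h1 : Complex.exp c = ∑' k : ℕ, ((k.factorial : ℂ))⁻¹ * c ^ k := by
      rw [Complex.exp_eq_exp_ℂ]
      simpa [smul_eq_mul] using congrFun (exp_eq_tsum (𝕂 := ℂ) (𝔸 := ℂ)) c
    rw [h1, Summable.tsum_eq_zero_add (by simpa [smul_eq_mul] using expSeries_summable' (𝕂 := ℂ) (x := c))]
    simp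
  have h2 : NormedSpace.exp (c • Q) = ∑' k : ℕ, ((k.factorial : ℂ))⁻¹ • (c • Q) ^ k :=
    congrFun (exp_eq_tsum (𝕂 := ℂ)) _
  rw [h2, Summable.tsum_eq_zero_add (expSeries_summable' (𝕂 := ℂ) (x := c • Q))]
  have h3 : ∀ k : ℕ, (((k + 1).factorial : ℂ))⁻¹ • (c • Q) ^ (k + 1)
      = ((((k + 1).factorial : ℂ))⁻¹ * c ^ (k + 1)) • Q := by
    intro k
    rw [smul_pow, hpow, smul_smul]
  simp only [h3]
  rw [Summable.tsum_smul_const hs, hexpc]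
  simp [add_sub_cancel_left]

noncomputable def starQ0 (n : ℕ) : Matrix (Unit ⊕ Fin n) (Unit ⊕ Fin n) ℂ :=
  Matrix.of fun _ _ => ((n : ℂ) + 1)⁻¹

def starv (n : ℕ) : Unit ⊕ Fin n → ℂ := Sum.elim (fun _ => (n : ℂ)) (fun _ => -1)

noncomputable def starQ2 (n : ℕ) : Matrix (Unit ⊕ Fin n) (Unit ⊕ Fin n) ℂ :=
  Matrix.of fun i j => starv n i * starv n j / ((n : ℂ) * ((n : ℂ) + 1))

section star
variable (n : ℕ) (hn : 1 ≤ n)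

lemma starn_ne : ((n : ℂ) + 1) ≠ 0 := by
  simp only [← Complex.ofReal_natCast, ← Complex.ofReal_one, ← Complex.ofReal_add, Ne,
    Complex.ofReal_eq_zero]
  positivity

include hn in
lemma starn_ne' : (n : ℂ) ≠ 0 := by
  exact_mod_cast Nat.cast_ne_zero.mpr (by omega)

lemma starv_sum : ∑ y, starv n y = 0 := by
  simp [starv, Fintype.sum_sum_type]

lemma starv_sq_sum : ∑ y, starv n y * starv n y = (n : ℂ) * ((n : ℂ) + 1) := by
  simp [starv, Fintype.sum_sum_type]
  ring

lemma starQ0_idem : starQ0 n * starQ0 n = starQ0 n := by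
  ext i j
  simp only [starQ0, Matrix.mul_apply, Matrix.of_apply, Finset.sum_const, Fintype.card_sum,
    Fintype.card_unit, Fintype.card_fin, nsmul_eq_mul, Finset.card_univ]
  have h := starn_ne n
  push_cast
  rw [← mul_inv, mul_inv, ← mul_assoc, add_comm (1 : ℂ), mul_inv_cancel₀ h, one_mul]

include hn in
lemma starQ2_idem : starQ2 n * starQ2 n = starQ2 n := by
  ext i j
  simp only [starQ2, Matrix.mul_apply, Matrix.of_apply]
  have h : ∀ y, starv n i * starv n y / ((n : ℂ) * ((n : ℂ) + 1)) *
      (starv n y * starv n j / ((n : ℂ) * ((n : ℂ) + 1)))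
      = (starv n i * starv n j / ((n : ℂ) * ((n : ℂ) + 1)) / ((n : ℂ) * ((n : ℂ) + 1)))
        * (starv n y * starv n y) := by
    intro y; ring
  simp only [h, ← Finset.mul_sum, starv_sq_sum]
  have h1 := starn_ne n
  have h2 := starn_ne' n hn
  field_simp

lemma starQ0_mul_Q2 : starQ0 n * starQ2 n = 0 := by
  ext i j
  simp only [Matrix.mul_apply, starQ0, starQ2, Matrix.of_apply, Matrix.zero_apply]
  have h : ∀ y, ((n : ℂ) + 1)⁻¹ * (starv n y * starv n j / ((n : ℂ) * ((n : ℂ) + 1)))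
      = (((n : ℂ) + 1)⁻¹ * starv n j / ((n : ℂ) * ((n : ℂ) + 1))) * starv n y := by
    intro y; ring
  simp only [h, ← Finset.mul_sum, starv_sum, mul_zero]

lemma starQ2_mul_Q0 : starQ2 n * starQ0 n = 0 := by
  ext i j
  simp only [Matrix.mul_apply, starQ0, starQ2, Matrix.of_apply, Matrix.zero_apply]
  have h : ∀ y, starv n i * starv n y / ((n : ℂ) * ((n : ℂ) + 1)) * ((n : ℂ) + 1)⁻¹
      = (starv n i * ((n : ℂ) + 1)⁻¹ / ((n : ℂ) * ((n : ℂ) + 1))) * starv n y := by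
    intro y; ring
  simp only [h, ← Finset.mul_sum, starv_sum, mul_zero]

end star


lemma matrix_exp_smul_one {m : Type*} [Fintype m] [DecidableEq m] (s : ℂ) :
    NormedSpace.exp (s • (1 : Matrix m m ℂ)) = Complex.exp s • (1 : Matrix m m ℂ) := by
  letI : SeminormedRing (Matrix m m ℂ) := Matrix.linftyOpSemiNormedRing
  letI : NormedRing (Matrix m m ℂ) := Matrix.linftyOpNormedRing
  letI : NormedAlgebra ℂ (Matrix m m ℂ) := Matrix.linftyOpNormedAlgebra
  have h1 : s • (1 : Matrix m m ℂ) = algebraMap ℂ (Matrix m m ℂ) s :=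
    (Algebra.algebraMap_eq_smul_one s).symm
  rw [h1, ← Algebra.algebraMap_eq_smul_one, Complex.exp_eq_exp_ℂ]
  exact (algebraMap_exp_comm s).symm

lemma matrix_exp_smul_idem {m : Type*} [Fintype m] [DecidableEq m]
    (Q : Matrix m m ℂ) (hQ : Q * Q = Q) (c : ℂ) :
    NormedSpace.exp (c • Q) = 1 + (Complex.exp c - 1) • Q := by
  letI : SeminormedRing (Matrix m m ℂ) := Matrix.linftyOpSemiNormedRing
  letI : NormedRing (Matrix m m ℂ) := Matrix.linftyOpNormedRing
  letI : NormedAlgebra ℂ (Matrix m m ℂ) := Matrix.linftyOpNormedAlgebra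
  exact exp_smul_idem_s16 Q hQ c

lemma cos_eq_neg_one_iff (x : ℝ) : Real.cos x = -1 ↔ ∃ j : ℤ, Odd j ∧ x = j * Real.pi := by
  constructor
  · intro h
    have h2 : Real.cos (x + Real.pi) = 1 := by rw [Real.cos_add_pi, h]; ring
    obtain ⟨k, hk⟩ := (Real.cos_eq_one_iff _).mp h2
    refine ⟨2 * k - 1, ⟨k - 1, by ring⟩, ?_⟩
    push_cast
    linarith [hk]
  · rintro ⟨j, ⟨k, rfl⟩, rfl⟩
    push_cast
    have : ((2 : ℝ) * k + 1) * Real.pi = k * (2 * Real.pi) + Real.pi := by ring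
    rw [this, Real.cos_add_pi, Real.cos_int_mul_two_pi]

/-- For the central vertex `w` of `K_{1,n}` (`n ≥ 2`) with Laplacian `L`,
`|U_L(t)_{w,w}| ≥ 1 − 2/(n+1)` for all `t`, with equality iff `t = jπ/(n+1)`
for some odd `j`. -/
theorem stmt_16 (n : ℕ) (hn : 2 ≤ n)
    (Adj : Matrix (Unit ⊕ Fin n) (Unit ⊕ Fin n) ℝ)
    (hAdj : Adj = Matrix.fromBlocks 0
      (Matrix.of fun _ _ => 1) (Matrix.of fun _ _ => 1) 0)
    (L : Matrix (Unit ⊕ Fin n) (Unit ⊕ Fin n) ℂ)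
    (hL : L = (Matrix.diagonal (fun x => ∑ y, Adj x y) - Adj).map Complex.ofReal)
    (t : ℝ) :
    1 - 2 / ((n : ℝ) + 1) ≤
      ‖(NormedSpace.exp ((Complex.I * t) • L)) (Sum.inl ()) (Sum.inl ())‖ ∧
    (‖(NormedSpace.exp ((Complex.I * t) • L)) (Sum.inl ()) (Sum.inl ())‖ =
        1 - 2 / ((n : ℝ) + 1) ↔
      ∃ j : ℤ, Odd j ∧ t = j * Real.pi / ((n : ℝ) + 1)) := by
  have hn1 : 1 ≤ n := by omega
  have hcne : ((n : ℂ) + 1) ≠ 0 := starn_ne n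
  have hnne : (n : ℂ) ≠ 0 := starn_ne' n hn1
  have hrne : ((n : ℝ) + 1) ≠ 0 := by positivity
  -- decompose L
  have hLdec : L = 1 - starQ0 n + (n : ℂ) • starQ2 n := by
    subst hAdj hL
    ext i j
    cases i <;> cases j <;>
      simp [Matrix.diagonal, starQ0, starQ2, starv, Fintype.sum_sum_type,
        Matrix.one_apply, Matrix.sub_apply, Matrix.add_apply, Matrix.smul_apply,
        Matrix.map_apply, Sum.inl.injEq, Sum.inr.injEq, smul_eq_mul] <;>
      field_simp <;> (try split_ifs) <;> push_cast <;> ring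
  set s : ℂ := Complex.I * t with hs
  -- split into commuting pieces
  have hsplit : s • L = s • (1 : Matrix (Unit ⊕ Fin n) (Unit ⊕ Fin n) ℂ) +
      ((-s) • starQ0 n + (s * n) • starQ2 n) := by
    rw [hLdec]; module
  have hcommQ : Commute (starQ0 n) (starQ2 n) := by
    unfold Commute SemiconjBy
    rw [starQ0_mul_Q2, starQ2_mul_Q0]
  have hcomm2 : Commute ((-s) • starQ0 n) ((s * n) • starQ2 n) :=
    (hcommQ.smul_left (-s)).smul_right (s * n)
  have hcomm1 : Commute (s • (1 : Matrix (Unit ⊕ Fin n) (Unit ⊕ Fin n) ℂ))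
      ((-s) • starQ0 n + (s * n) • starQ2 n) :=
    Commute.add_right (((Commute.one_left _).smul_left s).smul_right (-s))
      (((Commute.one_left _).smul_left s).smul_right (s * n))
  have hexp : NormedSpace.exp (s • L) = NormedSpace.exp (s • (1 : Matrix (Unit ⊕ Fin n) (Unit ⊕ Fin n) ℂ)) *
      (NormedSpace.exp ((-s) • starQ0 n) * NormedSpace.exp ((s * n) • starQ2 n)) := by
    rw [hsplit, Matrix.exp_add_of_commute _ _ hcomm1, Matrix.exp_add_of_commute _ _ hcomm2]
  have hprod : (1 + (Complex.exp (-s) - 1) • starQ0 n) * (1 + (Complex.exp (s * n) - 1) • starQ2 n)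
      = 1 + (Complex.exp (-s) - 1) • starQ0 n + (Complex.exp (s * n) - 1) • starQ2 n := by
    have h0 : ((Complex.exp (-s) - 1) • starQ0 n) * ((Complex.exp (s * n) - 1) • starQ2 n)
        = 0 := by
      rw [Matrix.smul_mul, Matrix.mul_smul, starQ0_mul_Q2]; simp
    rw [mul_add, mul_one, add_mul, one_mul, h0, add_zero]
  have hval : (NormedSpace.exp (s • L)) (Sum.inl ()) (Sum.inl ())
      = (1 + n * Complex.exp (s * ((n : ℂ) + 1))) / ((n : ℂ) + 1) := by
    rw [hexp, matrix_exp_smul_one, matrix_exp_smul_idem _ (starQ0_idem n) _,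
      matrix_exp_smul_idem _ (starQ2_idem n hn1) _, hprod, Matrix.smul_mul, one_mul]
    simp only [Matrix.smul_apply, Matrix.add_apply, Matrix.one_apply_eq, starQ0, starQ2, starv,
      Matrix.of_apply, Sum.elim_inl, smul_eq_mul]
    rw [show s * ((n : ℂ) + 1) = s + s * n by ring, Complex.exp_add, Complex.exp_neg]
    field_simp [Complex.exp_ne_zero]
    ring
  -- pass to real trigonometry
  set θ : ℝ := t * ((n : ℝ) + 1) with hθ
  have hsθ : s * ((n : ℂ) + 1) = (θ : ℂ) * Complex.I := by
    rw [hs, hθ]; push_cast; ring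
  have habs : ‖(NormedSpace.exp (s • L)) (Sum.inl ()) (Sum.inl ())‖
      = Real.sqrt (1 + (n : ℝ) ^ 2 + 2 * n * Real.cos θ) / ((n : ℝ) + 1) := by
    rw [hval, hsθ, norm_div]
    congr 1
    · rw [Complex.exp_mul_I]
      have hre : (1 : ℂ) + (n : ℂ) * (Complex.cos θ + Complex.sin θ * Complex.I)
          = ((1 + n * Real.cos θ : ℝ) : ℂ) + ((n * Real.sin θ : ℝ) : ℂ) * Complex.I := by
        push_cast [← Complex.ofReal_cos, ← Complex.ofReal_sin]
        ring
      rw [hre, Complex.norm_def, Complex.normSq_add_mul_I]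
      congr 1
      have := Real.sin_sq_add_cos_sq θ
      nlinarith [this]
    · have : ((n : ℂ) + 1) = (((n : ℝ) + 1 : ℝ) : ℂ) := by push_cast; ring
      rw [this, Complex.norm_real, Real.norm_of_nonneg (by positivity)]
  have hnR : (2 : ℝ) ≤ (n : ℝ) := by exact_mod_cast hn
  have hg_ge : ((n : ℝ) - 1) ^ 2 ≤ 1 + (n : ℝ) ^ 2 + 2 * n * Real.cos θ := by
    nlinarith [Real.neg_one_le_cos θ]
  have hsub : (1 : ℝ) - 2 / ((n : ℝ) + 1) = ((n : ℝ) - 1) / ((n : ℝ) + 1) := by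
    field_simp
    ring
  have hsqrt_ge : (n : ℝ) - 1 ≤ Real.sqrt (1 + (n : ℝ) ^ 2 + 2 * n * Real.cos θ) := by
    have h1 : (n : ℝ) - 1 = Real.sqrt (((n : ℝ) - 1) ^ 2) := by
      rw [Real.sqrt_sq (by linarith)]
    rw [h1]
    exact Real.sqrt_le_sqrt hg_ge
  have hgnn : (0 : ℝ) ≤ 1 + (n : ℝ) ^ 2 + 2 * n * Real.cos θ :=
    le_trans (by positivity) hg_ge
  constructor
  · rw [habs, hsub]
    gcongr
  · rw [habs, hsub, div_eq_div_iff (by positivity) (by positivity),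
      mul_left_inj' hrne]
    have key : Real.sqrt (1 + (n : ℝ) ^ 2 + 2 * n * Real.cos θ) = (n : ℝ) - 1 ↔
        Real.cos θ = -1 := by
      constructor
      · intro h
        have h2 : ((n : ℝ) - 1) ^ 2 = 1 + (n : ℝ) ^ 2 + 2 * n * Real.cos θ := by
          have h1 := Real.sq_sqrt hgnn
          rw [h] at h1
          linarith [h1]
        have h3 : 2 * (n : ℝ) * (1 + Real.cos θ) = 0 := by linear_combination -h2
        rcases mul_eq_zero.mp h3 with h4 | h4
        · exfalso; linarith
        · linarith
      · intro h
        rw [h, show 1 + (n : ℝ) ^ 2 + 2 * n * (-1 : ℝ) = ((n : ℝ) - 1) ^ 2 by ring]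
        exact Real.sqrt_sq (by linarith)
    rw [key, _root_.cos_eq_neg_one_iff]
    constructor
    · rintro ⟨j, hj, hjeq⟩
      rw [hθ] at hjeq
      exact ⟨j, hj, by rw [eq_div_iff hrne]; linarith⟩
    · rintro ⟨j, hj, hjeq⟩
      refine ⟨j, hj, ?_⟩
      rw [hθ, hjeq]
      field_simp
end

section
/- Let n₁,…,n_m ≥ 3 and X = □_{j=1}^m K_{n_j} be the Cartesian product of complete graphs, with adjacency Hamiltonian. Then every vertex w of X satisfies |U(t)_{w,w}| ≥ ∏_{j=1}^m (1 − 2/n_j) for all t. -/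
open Complex Matrix NormedSpace
open scoped Nat

namespace Stmt19Aux

variable {m : ℕ} {n : Fin m → ℕ}

/-- adjacency matrix of the complete graph `K_N`. -/
def Kc (N : ℕ) : Matrix (Fin N) (Fin N) ℂ := Matrix.of fun a b => if a = b then 0 else 1

/-- all-ones matrix. -/
def Jc (N : ℕ) : Matrix (Fin N) (Fin N) ℂ := Matrix.of fun _ _ => 1

lemma Jc_pow (N : ℕ) (k : ℕ) : Jc N ^ (k + 1) = ((N : ℂ)) ^ k • Jc N := by
  induction k with
  | zero => simp
  | succ k ih =>
    rw [pow_succ, ih]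
    ext a b
    simp [Jc, Matrix.mul_apply, Finset.card_univ, pow_succ]
    ring

lemma exp_smul_Jc (N : ℕ) (hN : N ≠ 0) (c : ℂ) :
    NormedSpace.exp (c • Jc N) = 1 + ((Complex.exp (c * N) - 1) / N) • Jc N := by
  letI : SeminormedRing (Matrix (Fin N) (Fin N) ℂ) := Matrix.linftyOpSemiNormedRing
  letI : NormedRing (Matrix (Fin N) (Fin N) ℂ) := Matrix.linftyOpNormedRing
  letI : NormedAlgebra ℂ (Matrix (Fin N) (Fin N) ℂ) := Matrix.linftyOpNormedAlgebra
  have hsum : Summable fun k : ℕ => (k !⁻¹ : ℂ) • (c • Jc N) ^ k :=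
    expSeries_summable' (𝕂 := ℂ) _
  rw [exp_eq_tsum ℂ]
  dsimp only
  rw [Summable.tsum_eq_zero_add hsum]
  have h0 : ((0:ℕ)!⁻¹ : ℂ) • (c • Jc N) ^ 0 = 1 := by simp
  rw [h0]
  congr 1
  have hterm : ∀ k : ℕ, (((k+1):ℕ)!⁻¹ : ℂ) • (c • Jc N) ^ (k+1)
      = ((c * N) ^ (k+1) / ((k+1):ℕ)! * (N : ℂ)⁻¹) • Jc N := by
    intro k
    rw [smul_pow, Jc_pow N k, smul_smul, smul_smul]
    have hN' : (N:ℂ) ≠ 0 := Nat.cast_ne_zero.mpr hN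
    have hf : (((1+k))! : ℂ) ≠ 0 := Nat.cast_ne_zero.mpr (Nat.factorial_ne_zero _)
    congr 1
    have hc : (c * ↑N) ^ (k+1) / (↑(k+1)! : ℂ) * (↑N)⁻¹
        = ((↑(k+1)!:ℂ))⁻¹ * c^(k+1) * ↑N^k * (↑N * (↑N)⁻¹) := by
      rw [mul_pow, pow_succ]; ring
    rw [hc, mul_inv_cancel₀ hN', mul_one]
  simp_rw [hterm]
  have hsum2 : Summable fun k : ℕ => (c * N) ^ (k+1) / ((k+1):ℕ)! * (N : ℂ)⁻¹ := by
    have := (expSeries_div_summable (c * N)).comp_injective (Nat.succ_injective)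
    exact this.mul_right _
  rw [Summable.tsum_smul_const hsum2]
  congr 1
  rw [tsum_mul_right]
  have hshift : ∑' k : ℕ, (c * N) ^ (k+1) / ((k+1):ℕ)! = Complex.exp (c * N) - 1 := by
    have hE : Complex.exp (c * N) = ∑' k : ℕ, (c * N) ^ k / (k)! := by
      rw [Complex.exp_eq_exp_ℂ, exp_eq_tsum_div]
    rw [hE, Summable.tsum_eq_zero_add (expSeries_div_summable (c * N))]
    simp
  rw [hshift]
  field_simp


lemma exp_smul_Kc (N : ℕ) (hN : N ≠ 0) (c : ℂ) :
    NormedSpace.exp (c • Kc N) =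
      Complex.exp (-c) • (1 + ((Complex.exp (c * N) - 1) / N) • Jc N) := by
  letI : SeminormedRing (Matrix (Fin N) (Fin N) ℂ) := Matrix.linftyOpSemiNormedRing
  letI : NormedRing (Matrix (Fin N) (Fin N) ℂ) := Matrix.linftyOpNormedRing
  letI : NormedAlgebra ℂ (Matrix (Fin N) (Fin N) ℂ) := Matrix.linftyOpNormedAlgebra
  have hK : c • Kc N = c • Jc N + algebraMap ℂ _ (-c) := by
    rw [Algebra.algebraMap_eq_smul_one]
    ext a b
    simp only [Kc, Jc, Matrix.add_apply, Matrix.smul_apply, Matrix.of_apply, Matrix.one_apply,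
      smul_eq_mul]
    by_cases h : a = b <;> simp [h]
  have hcomm : Commute (c • Jc N) (algebraMap ℂ (Matrix (Fin N) (Fin N) ℂ) (-c)) :=
    (Algebra.commutes' _ _).symm
  rw [hK, Matrix.exp_add_of_commute _ _ hcomm, exp_smul_Jc N hN c]
  erw [← map_exp (algebraMap ℂ (Matrix (Fin N) (Fin N) ℂ)) (continuous_algebraMap _ _)]
  rw [Algebra.algebraMap_eq_smul_one, ← Complex.exp_eq_exp_ℂ]
  rw [mul_smul_comm, mul_one]

lemma abs_exp_Kc_diag (N : ℕ) (hN : 3 ≤ N) (t : ℝ) (u : Fin N) :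
    1 - 2 / (N : ℝ) ≤ ‖(NormedSpace.exp ((Complex.I * t) • Kc N)) u u‖ := by
  have hN0 : N ≠ 0 := by omega
  have hN0' : (N : ℂ) ≠ 0 := Nat.cast_ne_zero.mpr hN0
  have hN0r : (0:ℝ) < N := by positivity
  rw [exp_smul_Kc N hN0]
  set z : ℂ := Complex.exp (Complex.I * t * N) with hz
  have hentry : ((Complex.exp (-(Complex.I * t)) •
      (1 + ((z - 1) / N) • Jc N)) : Matrix (Fin N) (Fin N) ℂ) u u
      = Complex.exp (-(Complex.I * t)) * (1 + (z - 1) / N) := by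
    simp [Jc, Matrix.one_apply, Matrix.add_apply]
  rw [hentry, norm_mul]
  have h1 : ‖Complex.exp (-(Complex.I * t))‖ = 1 := by
    rw [Complex.norm_exp]
    simp
  rw [h1, one_mul]
  have h2 : (1 : ℂ) + (z - 1) / N = ((N : ℂ) - 1 + z) / N := by
    field_simp
    ring
  rw [h2, norm_div]
  have h3 : ‖(N : ℂ)‖ = (N : ℝ) := by
    rw [Complex.norm_natCast]
  rw [h3]
  rw [le_div_iff₀ hN0r]
  have hzabs : ‖z‖ = 1 := by
    rw [hz, Complex.norm_exp]
    simp
  have h4 : ‖(N : ℂ) - 1‖ = (N : ℝ) - 1 := by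
    have h3' : (3:ℝ) ≤ N := by exact_mod_cast hN
    have hcast : ((N : ℂ) - 1) = (((N : ℝ) - 1 : ℝ) : ℂ) := by push_cast; ring
    rw [hcast, Complex.norm_real, Real.norm_eq_abs]
    exact abs_of_nonneg (by linarith)
  have h5 : (N : ℝ) - 2 ≤ ‖(N : ℂ) - 1 + z‖ := by
    have := norm_sub_norm_le ((N : ℂ) - 1) (-z)
    rw [sub_neg_eq_add] at this
    simp only [norm_neg] at this
    rw [h4, hzabs] at this
    linarith
  have h6 : (1 - 2 / (N:ℝ)) * N = (N : ℝ) - 2 := by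
    field_simp
  rw [h6]
  exact h5


/-- Lift a matrix on coordinate `j` to the product vertex set. -/
def lift (n : Fin m → ℕ) (j : Fin m) (e : Matrix (Fin (n j)) (Fin (n j)) ℂ) :
    Matrix ((k : Fin m) → Fin (n k)) ((k : Fin m) → Fin (n k)) ℂ :=
  Matrix.of fun x y => if ∀ k, k ≠ j → x k = y k then e (x j) (y j) else 0

lemma lift_eq (j : Fin m) (e : Matrix (Fin (n j)) (Fin (n j)) ℂ) :
    lift n j e = Matrix.reindex (Equiv.piSplitAt j fun k => Fin (n k)).symm
      (Equiv.piSplitAt j fun k => Fin (n k)).symm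
      (Matrix.kroneckerMap (· * ·) e
        (1 : Matrix ((k : {k : Fin m // k ≠ j}) → Fin (n k))
          ((k : {k : Fin m // k ≠ j}) → Fin (n k)) ℂ)) := by
  ext x y
  simp only [lift, Matrix.of_apply, Matrix.reindex_apply, Matrix.submatrix_apply,
    Equiv.symm_symm, Matrix.kroneckerMap_apply, Equiv.piSplitAt_apply, Matrix.one_apply]
  have hcond : (∀ k, k ≠ j → x k = y k) ↔
      ((fun k : {k : Fin m // k ≠ j} => x k) = fun k : {k : Fin m // k ≠ j} => y k) := by
    constructor
    · intro h; funext k; exact h k k.2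
    · intro h k hk; exact congrFun h ⟨k, hk⟩
  by_cases h : ∀ k, k ≠ j → x k = y k
  · rw [if_pos h, if_pos (hcond.mp h), mul_one]
  · rw [if_neg h, if_neg (fun hc => h (hcond.mpr hc)), mul_zero]

lemma lift_mul (j : Fin m) (e f : Matrix (Fin (n j)) (Fin (n j)) ℂ) :
    lift n j e * lift n j f = lift n j (e * f) := by
  simp only [lift_eq, Matrix.reindex_apply]
  rw [Matrix.submatrix_mul_equiv, ← Matrix.mul_kronecker_mul, one_mul]

lemma lift_one (j : Fin m) : lift n j (1 : Matrix (Fin (n j)) (Fin (n j)) ℂ) = 1 := by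
  rw [lift_eq, Matrix.one_kronecker_one]
  simp [Matrix.reindex_apply, Matrix.submatrix_one_equiv]

lemma lift_add (j : Fin m) (e f : Matrix (Fin (n j)) (Fin (n j)) ℂ) :
    lift n j (e + f) = lift n j e + lift n j f := by
  ext x y
  simp only [lift, Matrix.of_apply, Matrix.add_apply]
  split <;> simp

lemma lift_zero (j : Fin m) : lift n j (0 : Matrix (Fin (n j)) (Fin (n j)) ℂ) = 0 := by
  ext x y
  simp only [lift, Matrix.of_apply, Matrix.zero_apply]
  split <;> simp

lemma lift_smul (j : Fin m) (c : ℂ) (e : Matrix (Fin (n j)) (Fin (n j)) ℂ) :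
    c • lift n j e = lift n j (c • e) := by
  ext x y
  simp only [lift, Matrix.of_apply, Matrix.smul_apply, smul_eq_mul]
  split <;> simp

/-- `lift` as a ring homomorphism. -/
def liftRingHom (n : Fin m → ℕ) (j : Fin m) :
    Matrix (Fin (n j)) (Fin (n j)) ℂ →+* Matrix ((k : Fin m) → Fin (n k)) ((k : Fin m) → Fin (n k)) ℂ where
  toFun := lift n j
  map_one' := lift_one j
  map_mul' := fun e f => (lift_mul j e f).symm
  map_zero' := lift_zero j
  map_add' := lift_add j

lemma lift_continuous (j : Fin m) : Continuous (lift n j) := by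
  apply continuous_matrix
  intro x y
  simp only [lift, Matrix.of_apply]
  split
  · exact (continuous_apply _).comp ((continuous_apply (x j)).comp continuous_id')
  · exact continuous_const

lemma lift_exp (j : Fin m) (e : Matrix (Fin (n j)) (Fin (n j)) ℂ) :
    NormedSpace.exp (lift n j e) = lift n j (NormedSpace.exp e) := by
  letI : SeminormedRing (Matrix (Fin (n j)) (Fin (n j)) ℂ) := Matrix.linftyOpSemiNormedRing
  letI : NormedRing (Matrix (Fin (n j)) (Fin (n j)) ℂ) := Matrix.linftyOpNormedRing
  letI : NormedAlgebra ℂ (Matrix (Fin (n j)) (Fin (n j)) ℂ) := Matrix.linftyOpNormedAlgebra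
  letI : NormedAlgebra ℚ (Matrix (Fin (n j)) (Fin (n j)) ℂ) := Matrix.linftyOpNormedAlgebra
  letI : SeminormedRing (Matrix ((k : Fin m) → Fin (n k)) ((k : Fin m) → Fin (n k)) ℂ) :=
    Matrix.linftyOpSemiNormedRing
  letI : NormedRing (Matrix ((k : Fin m) → Fin (n k)) ((k : Fin m) → Fin (n k)) ℂ) :=
    Matrix.linftyOpNormedRing
  letI : NormedAlgebra ℂ (Matrix ((k : Fin m) → Fin (n k)) ((k : Fin m) → Fin (n k)) ℂ) :=
    Matrix.linftyOpNormedAlgebra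
  have hc : Continuous (liftRingHom n j) := lift_continuous j
  exact (map_exp (liftRingHom n j) hc e).symm


/-- Key computation: multiplying `lift j e` by a matrix `P` which is a "product over `s`"
    with `j ∉ s`. -/
lemma lift_mul_apply (j : Fin m) (e : Matrix (Fin (n j)) (Fin (n j)) ℂ)
    (P : Matrix ((k : Fin m) → Fin (n k)) ((k : Fin m) → Fin (n k)) ℂ)
    (g : (k : Fin m) → Fin (n k) → Fin (n k) → ℂ)
    (s : Finset (Fin m)) (hj : j ∉ s)
    (hP : ∀ x y, P x y = (∏ k ∈ s, g k (x k) (y k)) * (if ∀ k ∉ s, x k = y k then 1 else 0))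
    (x y : (k : Fin m) → Fin (n k)) :
    (lift n j e * P) x y =
      e (x j) (y j) * (∏ k ∈ s, g k (x k) (y k)) *
        (if ∀ k ∉ insert j s, x k = y k then 1 else 0) := by
  classical
  rw [Matrix.mul_apply]
  rw [Finset.sum_eq_single (Function.update x j (y j))]
  · have h1 : lift n j e x (Function.update x j (y j)) = e (x j) (y j) := by
      simp only [lift, Matrix.of_apply]
      rw [if_pos, Function.update_self]
      intro k hk
      rw [Function.update_of_ne hk]
    rw [h1, hP]
    have h2 : ∏ k ∈ s, g k (Function.update x j (y j) k) (y k) = ∏ k ∈ s, g k (x k) (y k) := by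
      refine Finset.prod_congr rfl fun k hk => ?_
      rw [Function.update_of_ne (fun h : k = j => hj (by rwa [h] at hk))]
    rw [h2]
    have h3 : (∀ k ∉ s, Function.update x j (y j) k = y k) ↔ (∀ k ∉ insert j s, x k = y k) := by
      constructor
      · intro h k hk
        have hkj : k ≠ j := fun h' => hk (h' ▸ Finset.mem_insert_self j s)
        have hks : k ∉ s := fun h' => hk (Finset.mem_insert_of_mem h')
        have := h k hks
        rwa [Function.update_of_ne hkj] at this
      · intro h k hk
        by_cases hkj : k = j
        · subst hkj; rw [Function.update_self]
        · rw [Function.update_of_ne hkj]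
          exact h k (by simp [hkj, hk])
    rw [if_congr h3 rfl rfl]
    ring
  · intro z _ hz
    by_cases hc1 : ∀ k, k ≠ j → x k = z k
    · by_cases hc2 : ∀ k ∉ s, z k = y k
      · exfalso
        apply hz
        funext k
        by_cases hkj : k = j
        · rw [hkj, Function.update_self]
          exact hc2 j hj
        · rw [Function.update_of_ne hkj]
          exact (hc1 k hkj).symm
      · rw [hP, if_neg hc2, mul_zero, mul_zero]
    · simp only [lift, Matrix.of_apply]
      rw [if_neg hc1, zero_mul]
  · intro h
    exact absurd (Finset.mem_univ _) h

lemma noncommProd_lift_apply (e : (j : Fin m) → Matrix (Fin (n j)) (Fin (n j)) ℂ)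
    (s : Finset (Fin m)) :
    ∀ (hc : (s : Set (Fin m)).Pairwise (Function.onFun Commute fun j => lift n j (e j)))
      (x y : (k : Fin m) → Fin (n k)),
    (s.noncommProd (fun j => lift n j (e j)) hc) x y =
      (∏ j ∈ s, e j (x j) (y j)) * (if ∀ k ∉ s, x k = y k then 1 else 0) := by
  classical
  induction s using Finset.induction_on with
  | empty =>
    intro hc x y
    simp only [Finset.noncommProd_empty, Finset.prod_empty, one_mul, Finset.notMem_empty]
    rw [Matrix.one_apply]
    congr 1
    simp only [eq_iff_iff]
    constructor
    · intro h k _; exact congrFun h k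
    · intro h; funext k; exact h k (by simp)
  | @insert j s hj ih =>
    intro hc x y
    rw [Finset.noncommProd_insert_of_notMem _ _ _ _ hj]
    rw [lift_mul_apply j (e j) _ (fun k a b => e k a b) s hj
      (fun x' y' => ih _ x' y')]
    rw [Finset.prod_insert hj]


lemma lift_mul_lift_apply (j k : Fin m) (hjk : j ≠ k)
    (e : Matrix (Fin (n j)) (Fin (n j)) ℂ) (f : Matrix (Fin (n k)) (Fin (n k)) ℂ)
    (x y : (l : Fin m) → Fin (n l)) :
    (lift n j e * lift n k f) x y =
      e (x j) (y j) * f (x k) (y k) *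
        (if ∀ l ∉ ({j, k} : Finset (Fin m)), x l = y l then 1 else 0) := by
  classical
  set g : (l : Fin m) → Fin (n l) → Fin (n l) → ℂ :=
    fun l a b => if h : l = k then f (h ▸ a) (h ▸ b) else 0 with hg
  have hgk : ∀ (a b : Fin (n k)), g k a b = f a b := by
    intro a b; simp [hg]
  have hP : ∀ x y, lift n k f x y =
      (∏ l ∈ ({k} : Finset (Fin m)), g l (x l) (y l)) *
        (if ∀ l ∉ ({k} : Finset (Fin m)), x l = y l then 1 else 0) := by
    intro x y
    rw [Finset.prod_singleton, hgk]
    simp only [lift, Matrix.of_apply, Finset.mem_singleton]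
    by_cases h : ∀ l, l ≠ k → x l = y l
    · rw [if_pos h, if_pos h, mul_one]
    · rw [if_neg h, if_neg h, mul_zero]
  have := lift_mul_apply j e (lift n k f) g {k} (by simp [hjk]) hP x y
  rw [this, Finset.prod_singleton, hgk]

lemma lift_commute {j k : Fin m} (hjk : j ≠ k)
    (e : Matrix (Fin (n j)) (Fin (n j)) ℂ) (f : Matrix (Fin (n k)) (Fin (n k)) ℂ) :
    Commute (lift n j e) (lift n k f) := by
  classical
  show _ = _
  ext x y
  rw [Matrix.mul_apply, ← Matrix.mul_apply, Matrix.mul_apply, ← Matrix.mul_apply]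
  rw [lift_mul_lift_apply j k hjk e f x y, lift_mul_lift_apply k j hjk.symm f e x y]
  rw [Finset.pair_comm j k]
  ring


lemma A_decomp :
    (Matrix.of fun x y : (k : Fin m) → Fin (n k) =>
      if (Finset.univ.filter fun j => x j ≠ y j).card = 1 then (1:ℂ) else 0) =
    ∑ j, lift n j (Kc (n j)) := by
  classical
  ext x y
  rw [Matrix.sum_apply]
  set D : Finset (Fin m) := Finset.univ.filter fun j => x j ≠ y j with hD
  have key : ∀ j, (lift n j (Kc (n j))) x y = if D = {j} then 1 else 0 := by
    intro j
    simp only [lift, Matrix.of_apply, Kc]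
    by_cases h : D = {j}
    · have hj : x j ≠ y j := by
        have : j ∈ D := h ▸ Finset.mem_singleton_self j
        simpa [hD] using this
      have hothers : ∀ k, k ≠ j → x k = y k := by
        intro k hk
        by_contra hne
        have : k ∈ D := by simp [hD, hne]
        rw [h, Finset.mem_singleton] at this
        exact hk this
      rw [if_pos hothers, if_neg hj, if_pos h]
    · by_cases h1 : ∀ k, k ≠ j → x k = y k
      · rw [if_pos h1, if_neg h]
        by_cases h2 : x j = y j
        · rw [if_pos h2]
        · exfalso
          apply h
          ext k
          simp only [hD, Finset.mem_filter, Finset.mem_univ, true_and, Finset.mem_singleton]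
          constructor
          · intro hk
            by_contra hkj
            exact hk (h1 k hkj)
          · intro hk; subst hk; exact h2
      · rw [if_neg h1, if_neg h]
  simp only [key]
  by_cases hcard : D.card = 1
  · obtain ⟨i, hi⟩ := Finset.card_eq_one.mp hcard
    rw [Matrix.of_apply, if_pos hcard]
    have : ∀ j, (if D = {j} then (1:ℂ) else 0) = if i = j then 1 else 0 := by
      intro j
      rw [hi]
      simp [Finset.singleton_inj]
    simp only [this]
    simp
  · rw [Matrix.of_apply, if_neg hcard]
    refine (Finset.sum_eq_zero fun j _ => ?_).symm
    rw [if_neg]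
    intro h
    rw [h] at hcard
    simp at hcard


end Stmt19Aux

open Stmt19Aux in
/-- For the Cartesian product `X = □_{j=1}^m K_{n_j}` of complete graphs with each
`n_j ≥ 3`, with adjacency Hamiltonian, every vertex `w` satisfies
`|U(t)_{w,w}| ≥ ∏_j (1 − 2/n_j)` for all `t`. -/
theorem stmt_19 (m : ℕ) (n : Fin m → ℕ) (hn : ∀ j, 3 ≤ n j)
    (A : Matrix ((j : Fin m) → Fin (n j)) ((j : Fin m) → Fin (n j)) ℂ)
    (hA : A = Matrix.of fun x y =>
      if (Finset.univ.filter fun j => x j ≠ y j).card = 1 then 1 else 0)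
    (w : (j : Fin m) → Fin (n j)) (t : ℝ) :
    ∏ j, (1 - 2 / (n j : ℝ)) ≤
      ‖(NormedSpace.exp ((Complex.I * t) • A)) w w‖ := by
  classical
  subst hA
  rw [A_decomp (n := n), Finset.smul_sum]
  have hpair : (↑(Finset.univ : Finset (Fin m)) : Set (Fin m)).Pairwise
      (Function.onFun Commute fun j => (Complex.I * t) • lift n j (Kc (n j))) := by
    intro j _ k _ hjk
    exact ((lift_commute hjk _ _).smul_left _).smul_right _
  rw [Matrix.exp_sum_of_commute Finset.univ _ hpair]
  have hfact : ∀ j ∈ (Finset.univ : Finset (Fin m)),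
      NormedSpace.exp ((Complex.I * t) • lift n j (Kc (n j)))
        = lift n j (NormedSpace.exp ((Complex.I * t) • Kc (n j))) := by
    intro j _
    rw [lift_smul, lift_exp]
  have hcommL : (↑(Finset.univ : Finset (Fin m)) : Set (Fin m)).Pairwise
      (Function.onFun Commute fun j => NormedSpace.exp ((Complex.I * t) • lift n j (Kc (n j)))) := by
    intro j hj k hk hjk
    dsimp only [Function.onFun]
    rw [hfact j hj, hfact k hk]
    exact lift_commute hjk _ _
  rw [Finset.noncommProd_congr rfl hfact hcommL]
  erw [noncommProd_lift_apply (fun j => NormedSpace.exp ((Complex.I * t) • Kc (n j)))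
    Finset.univ _ w w]
  rw [if_pos (fun k hk => absurd (Finset.mem_univ k) hk), mul_one]
  rw [norm_prod]
  refine Finset.prod_le_prod (fun j _ => ?_) (fun j _ => ?_)
  · have h3 : (3:ℝ) ≤ (n j : ℝ) := by exact_mod_cast hn j
    rw [sub_nonneg, div_le_one (by linarith)]
    linarith
  · exact abs_exp_Kc_diag (n j) (hn j) t (w j)
end
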